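/- arXiv:0902.3483 — 5 statements merged into one kernel-verified Lean document; each statement's English description precedes it below -/
import Mathlib

section
/- There exists a compact subset K of an infinite-dimensional separable Hilbert space H such that the only bounded linear operator T on H satisfying TK ⊇ K is the identity operator. -/
open Filter Topology Metric

open RealInnerProductSpace in
private lemma aux_inj_surj (f : ℕ → ℕ) (hf : Function.Injective f) (N : ℕ)
    (hN : ∀ k, N ≤ k → f k ≤ k) : Function.Surjective f := by
  intro j
  set n := N + (Finset.range N).sup f + j with hn
  have hmaps : ∀ k ∈ Finset.range (n + 1), f k ∈ Finset.range (n + 1) := by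
    intro k hk
    simp only [Finset.mem_range] at *
    rcases lt_or_ge k N with h | h
    · have : f k ≤ (Finset.range N).sup f := Finset.le_sup (Finset.mem_range.mpr h)
      omega
    · have := hN k h; omega
  have himg : Finset.image f (Finset.range (n + 1)) = Finset.range (n + 1) := by
    apply Finset.eq_of_subset_of_card_le
    · intro x hx
      obtain ⟨k, hk, rfl⟩ := Finset.mem_image.mp hx
      exact hmaps k hk
    · rw [Finset.card_image_of_injective _ hf]
  have hj : j ∈ Finset.image f (Finset.range (n + 1)) := by
    rw [himg]
    simp only [Finset.mem_range]
    omega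
  obtain ⟨k, _, hk⟩ := Finset.mem_image.mp hj
  exact ⟨k, hk⟩

private lemma aux_pow_inj {a b : ℕ} (h : (2⁻¹ : ℝ) ^ a = (2⁻¹ : ℝ) ^ b) : a = b := by
  by_contra hne
  rcases Nat.lt_or_ge a b with hl | hge
  · have := pow_lt_pow_right_of_lt_one₀ (by norm_num : (0:ℝ) < 2⁻¹) (by norm_num) hl
    linarith
  · have hl : b < a := by omega
    have := pow_lt_pow_right_of_lt_one₀ (by norm_num : (0:ℝ) < 2⁻¹) (by norm_num) hl
    linarith

set_option maxHeartbeats 1000000 in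
open RealInnerProductSpace in
private theorem aux_main {H : Type*} [NormedAddCommGroup H] [InnerProductSpace ℝ H]
    (e : ℕ → H) (horth : Orthonormal ℝ e)
    (hdense : Dense ((Submodule.span ℝ (Set.range e) : Submodule ℝ H) : Set H)) :
    ∃ K : Set H, IsCompact K ∧
      ∀ T : H →L[ℝ] H, K ⊆ T '' K → T = ContinuousLinearMap.id ℝ H := by
  classical
  set w : ℕ → H := fun n => e n + (2⁻¹ : ℝ) • e (n + 1) with hwdef
  set ρ : ℕ → ℝ := fun k => (2⁻¹ : ℝ) ^ (k * k) with hρdef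
  set z : ℕ → H := fun k => ρ k • w (k / 2) with hzdef
  have hwk : ∀ n, w n = e n + (2⁻¹ : ℝ) • e (n + 1) := fun _ => rfl
  have hρk : ∀ k, ρ k = (2⁻¹ : ℝ) ^ (k * k) := fun _ => rfl
  have hzk : ∀ k, z k = ρ k • w (k / 2) := fun _ => rfl
  have hone : ∀ i, ‖e i‖ = 1 := horth.1
  have hρpos : ∀ k, 0 < ρ k := fun k => by positivity
  -- inner products with basis vectors
  have hinner_w : ∀ t n, ⟪e t, w n⟫ =
      (if t = n then (1:ℝ) else 0) + 2⁻¹ * (if t = n + 1 then 1 else 0) := by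
    intro t n
    have h1 : ⟪e t, e n⟫ = if t = n then (1:ℝ) else 0 := orthonormal_iff_ite.mp horth t n
    have h2 : ⟪e t, e (n+1)⟫ = if t = n + 1 then (1:ℝ) else 0 :=
      orthonormal_iff_ite.mp horth t (n+1)
    rw [hwk n, inner_add_right, real_inner_smul_right, h1, h2]
  -- uniqueness of direction and coefficient
  have huniq : ∀ (n m : ℕ) (c d : ℝ), 0 < c → 0 < d → c • w n = d • w m → n = m ∧ c = d := by
    intro n m c d hc hd heq
    have h1 : ⟪e n, c • w n⟫ = ⟪e n, d • w m⟫ := by rw [heq]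
    have h2 : ⟪e m, c • w n⟫ = ⟪e m, d • w m⟫ := by rw [heq]
    rw [real_inner_smul_right, real_inner_smul_right, hinner_w, hinner_w] at h1 h2
    by_cases hnm : n = m
    · subst hnm
      refine ⟨rfl, ?_⟩
      rw [if_pos rfl, if_neg (by omega : ¬ n = n + 1)] at h1
      linarith
    · exfalso
      split_ifs at h1 h2 <;> first | omega | linarith
  -- norms
  have hwsq : ∀ n, ‖w n‖ ^ 2 = 5 / 4 := by
    intro n
    have hz : ⟪e n, (2⁻¹ : ℝ) • e (n+1)⟫ = 0 := by
      rw [real_inner_smul_right, orthonormal_iff_ite.mp horth n (n+1),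
        if_neg (by omega : ¬ n = n + 1)]
      ring
    have : w n = e n + (2⁻¹ : ℝ) • e (n+1) := rfl
    rw [this, norm_add_sq_real, hz, norm_smul, hone, hone]
    norm_num
  have hw1 : ∀ n, 1 ≤ ‖w n‖ := fun n => by nlinarith [hwsq n, norm_nonneg (w n)]
  have hw2 : ∀ n, ‖w n‖ ≤ 2 := fun n => by nlinarith [hwsq n, norm_nonneg (w n)]
  have hwne : ∀ n, w n ≠ 0 := by
    intro n h
    have := hw1 n
    rw [h, norm_zero] at this
    linarith
  have hzne : ∀ k, z k ≠ 0 := fun k =>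
    smul_ne_zero (ne_of_gt (hρpos k)) (hwne (k / 2))
  have hznorm : ∀ k, ‖z k‖ = ρ k * ‖w (k / 2)‖ := by
    intro k
    rw [hzk k, norm_smul, Real.norm_eq_abs, abs_of_pos (hρpos k)]
  -- ρ is antitone
  have hρanti : ∀ {a b : ℕ}, a ≤ b → ρ b ≤ ρ a := by
    intro a b hab
    exact pow_le_pow_of_le_one (by norm_num) (by norm_num) (Nat.mul_le_mul hab hab)
  -- compactness
  have hz0 : Tendsto z atTop (𝓝 (0 : H)) := by
    refine squeeze_zero_norm (a := fun k => 2 * (2⁻¹ : ℝ) ^ k) (fun k => ?_) ?_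
    · have h1 : ρ k ≤ (2⁻¹ : ℝ) ^ k := by
        rw [hρk k]
        exact pow_le_pow_of_le_one (by norm_num) (by norm_num) (by nlinarith)
      have := hw2 (k / 2)
      rw [hznorm k]
      nlinarith [hρpos k, pow_nonneg (by norm_num : (0:ℝ) ≤ 2⁻¹) k]
    · have := (tendsto_pow_atTop_nhds_zero_of_lt_one
        (by norm_num : (0:ℝ) ≤ 2⁻¹) (by norm_num : (2⁻¹ : ℝ) < 1)).const_mul (2:ℝ)
      simpa using this
  refine ⟨insert (0 : H) (Set.range z), hz0.isCompact_insert_range, ?_⟩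
  intro T hT
  -- choose preimages
  have hpre : ∀ k, ∃ j, T (z j) = z k := by
    intro k
    obtain ⟨u, huK, hTu⟩ := hT (Set.mem_insert_of_mem _ (Set.mem_range_self k))
    rcases Set.mem_insert_iff.mp huK with rfl | ⟨j, rfl⟩
    · exact absurd (by rw [← hTu, map_zero]) (Ne.symm (hzne k))
    · exact ⟨j, hTu⟩
  choose f hfz using hpre
  have hzinj : Function.Injective z := by
    intro k k' h
    have := huniq (k / 2) (k' / 2) (ρ k) (ρ k') (hρpos k) (hρpos k') h
    have hρeq : (2⁻¹ : ℝ) ^ (k * k) = (2⁻¹ : ℝ) ^ (k' * k') := by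
      rw [← hρk k, ← hρk k']
      exact this.2
    have := aux_pow_inj hρeq
    nlinarith
  have hfinj : Function.Injective f := by
    intro k k' h
    apply hzinj
    rw [← hfz k, ← hfz k', h]
  -- norm bound gives eventual f k ≤ k
  have hbound : ∀ k, ρ k ≤ 2 * ‖T‖ * ρ (f k) := by
    intro k
    have h1 := T.le_opNorm (z (f k))
    rw [hfz k] at h1
    rw [hznorm k, hznorm (f k)] at h1
    have h2 := hw1 (k / 2)
    have h3 := hw2 (f k / 2)
    have h4 := hρpos k
    have h5 := hρpos (f k)
    have h6 : (0:ℝ) ≤ ‖T‖ := norm_nonneg T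
    have a1 : ρ k * 1 ≤ ρ k * ‖w (k / 2)‖ := mul_le_mul_of_nonneg_left h2 h4.le
    have a2 : ‖T‖ * (ρ (f k) * ‖w (f k / 2)‖) ≤ ‖T‖ * (ρ (f k) * 2) :=
      mul_le_mul_of_nonneg_left (mul_le_mul_of_nonneg_left h3 h5.le) h6
    linarith
  obtain ⟨N, hN2⟩ : ∃ n : ℕ, 2 * ‖T‖ < 2 ^ n :=
    pow_unbounded_of_one_lt (2 * ‖T‖) (by norm_num : (1:ℝ) < 2)
  have hNle : ∀ k, N ≤ k → f k ≤ k := by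
    intro k hk
    by_contra hgt
    push_neg at hgt
    have h1 : ρ (f k) ≤ ρ (k + 1) := hρanti hgt
    have h6 : (0:ℝ) ≤ ‖T‖ := norm_nonneg T
    have key : ρ k ≤ 2 * ‖T‖ * ρ (k + 1) := by
      have := hbound k
      nlinarith
    have hexp : ρ (k + 1) = ρ k * (2⁻¹ : ℝ) ^ (2 * k + 1) := by
      rw [hρk (k + 1), hρk k, ← pow_add]
      congr 1
      ring
    rw [hexp] at key
    have hρk := hρpos k
    have hstep : 1 ≤ 2 * ‖T‖ * (2⁻¹ : ℝ) ^ (2 * k + 1) := by nlinarith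
    have hq : (2⁻¹ : ℝ) ^ (2 * k + 1) = ((2:ℝ) ^ (2 * k + 1))⁻¹ := by rw [inv_pow]
    rw [hq] at hstep
    have hp : (0:ℝ) < (2:ℝ) ^ (2 * k + 1) := by positivity
    have h2k : (2:ℝ) ^ (2 * k + 1) ≤ 2 * ‖T‖ := by
      rw [← div_eq_mul_inv] at hstep
      exact (one_le_div hp).mp hstep
    have hmono : (2:ℝ) ^ N ≤ (2:ℝ) ^ (2 * k + 1) :=
      pow_le_pow_right₀ (by norm_num) (by omega)
    linarith
  have hsurj : Function.Surjective f := aux_inj_surj f hfinj N hNle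
  -- T fixes each w p
  have hTw : ∀ p, T (w p) = w p := by
    intro p
    obtain ⟨k₁, hk₁⟩ := hsurj (2 * p)
    obtain ⟨k₂, hk₂⟩ := hsurj (2 * p + 1)
    have hd1 : (2 * p) / 2 = p := by omega
    have hd2 : (2 * p + 1) / 2 = p := by omega
    have e₁ : ρ (2 * p) • T (w p) = ρ k₁ • w (k₁ / 2) := by
      have h := hfz k₁
      rw [hk₁, hzk (2 * p), hzk k₁, hd1, map_smul] at h
      exact h
    have e₂ : ρ (2 * p + 1) • T (w p) = ρ k₂ • w (k₂ / 2) := by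
      have h := hfz k₂
      rw [hk₂, hzk (2 * p + 1), hzk k₂, hd2, map_smul] at h
      exact h
    have hcomb : (ρ (2 * p + 1) * ρ k₁) • w (k₁ / 2)
        = (ρ (2 * p) * ρ k₂) • w (k₂ / 2) := by
      rw [mul_smul, ← e₁, mul_smul, ← e₂, smul_comm]
    obtain ⟨hhalf, hcoeff⟩ := huniq _ _ _ _
      (mul_pos (hρpos _) (hρpos _)) (mul_pos (hρpos _) (hρpos _)) hcomb
    have hkne : k₁ ≠ k₂ := by
      intro h
      rw [h, hk₂] at hk₁
      omega
    have hexp : (2 * p + 1) * (2 * p + 1) + k₁ * k₁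
        = (2 * p) * (2 * p) + k₂ * k₂ := by
      have h' : (2⁻¹ : ℝ) ^ ((2 * p + 1) * (2 * p + 1) + k₁ * k₁)
          = (2⁻¹ : ℝ) ^ ((2 * p) * (2 * p) + k₂ * k₂) := by
        rw [pow_add, pow_add, ← hρk (2 * p + 1), ← hρk k₁, ← hρk (2 * p), ← hρk k₂]
        exact hcoeff
      exact aux_pow_inj h'
    have hk1p : k₁ = 2 * p := by
      rcases (by omega : k₂ = k₁ + 1 ∨ k₁ = k₂ + 1) with h | h
      · subst h
        nlinarith
      · subst h
        exfalso
        nlinarith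
    rw [hk1p, hd1] at e₁
    exact smul_right_injective H (ne_of_gt (hρpos (2 * p))) e₁
  -- T fixes each e p
  have hrec : ∀ p, T (e p) - e p = (-(2⁻¹ : ℝ)) • (T (e (p + 1)) - e (p + 1)) := by
    intro p
    have h := hTw p
    rw [hwk p] at h
    simp only [map_add, map_smul] at h
    have h' : T (e p) = e p + (2⁻¹:ℝ) • e (p+1) - (2⁻¹:ℝ) • T (e (p+1)) := by
      rw [← h]
      abel
    rw [h', neg_smul, smul_sub]
    abel
  have hbound2 : ∀ p, ‖T (e p) - e p‖ ≤ ‖T‖ + 1 := by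
    intro p
    refine (norm_sub_le _ _).trans ?_
    have h1 := T.le_opNorm (e p)
    rw [hone p, mul_one] at h1
    rw [hone p]
    linarith
  have hiter : ∀ m p, ‖T (e p) - e p‖ ≤ (2⁻¹ : ℝ) ^ m * (‖T‖ + 1) := by
    intro m
    induction m with
    | zero => simpa using hbound2
    | succ m ih =>
      intro p
      rw [hrec p, norm_smul]
      have hn : ‖(-(2⁻¹ : ℝ))‖ = 2⁻¹ := by
        rw [norm_neg, Real.norm_eq_abs]
        norm_num
      rw [hn, pow_succ]
      have := ih (p + 1)
      nlinarith [norm_nonneg (T (e (p+1)) - e (p+1)),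
        pow_nonneg (by norm_num : (0:ℝ) ≤ 2⁻¹) m, norm_nonneg T]
  have hTe : ∀ p, T (e p) = e p := by
    intro p
    have hlim : Tendsto (fun m : ℕ => (2⁻¹ : ℝ) ^ m * (‖T‖ + 1)) atTop (𝓝 0) := by
      have := (tendsto_pow_atTop_nhds_zero_of_lt_one
        (by norm_num : (0:ℝ) ≤ 2⁻¹) (by norm_num : (2⁻¹ : ℝ) < 1)).mul_const (‖T‖ + 1)
      simpa using this
    have h0 : ‖T (e p) - e p‖ ≤ 0 := ge_of_tendsto' hlim (fun m => hiter m p)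
    have := le_antisymm h0 (norm_nonneg _)
    rw [norm_eq_zero, sub_eq_zero] at this
    exact this
  apply ContinuousLinearMap.ext_on hdense
  rintro x ⟨p, rfl⟩
  simpa using hTe p

/-- There exists a compact subset `K` of an infinite-dimensional separable Hilbert space `H`
such that the only bounded linear operator `T` on `H` satisfying `T K ⊇ K` is the identity. -/
theorem exists_compact_set_with_trivial_covering_semigroup
    {H : Type*} [NormedAddCommGroup H] [InnerProductSpace ℝ H] [CompleteSpace H]
    [TopologicalSpace.SeparableSpace H] (hH : ¬ FiniteDimensional ℝ H) :
    ∃ K : Set H, IsCompact K ∧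
      ∀ T : H →L[ℝ] H, K ⊆ T '' K → T = ContinuousLinearMap.id ℝ H := by
  classical
  obtain ⟨w, b, hb⟩ := exists_hilbertBasis ℝ H
  have horthw : Orthonormal ℝ ((↑) : w → H) := by
    have := b.orthonormal
    rwa [hb] at this
  have hdspan : (Submodule.span ℝ w).topologicalClosure = ⊤ := by
    have := b.dense_span
    rwa [hb, Subtype.range_coe] at this
  -- w is countable
  obtain ⟨s, hsc, hsd⟩ := TopologicalSpace.exists_countable_dense H
  haveI hsC : Countable s := hsc.to_subtype
  have hFex : ∀ x : w, ∃ y : s, dist (x : H) (y : H) < 2⁻¹ := by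
    intro x
    obtain ⟨y, hy, hlt⟩ := hsd.exists_dist_lt (x : H) (by norm_num : (0:ℝ) < 2⁻¹)
    exact ⟨⟨y, hy⟩, by simpa [dist_comm] using hlt⟩
  choose F hF using hFex
  have hFinj : Function.Injective F := by
    intro x y hxy
    by_contra hne
    have h2 : ‖(x : H) - (y : H)‖ ^ 2 = 2 := by
      rw [norm_sub_sq_real, horthw.1 x, horthw.1 y, horthw.2 hne]
      norm_num
    have hgt : (1 : ℝ) < dist (x : H) (y : H) := by
      rw [dist_eq_norm]
      nlinarith [norm_nonneg ((x : H) - (y : H))]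
    have htri := dist_triangle (x : H) ((F y : H)) ((y : H))
    have h1 := hF x
    rw [hxy] at h1
    have h2' : dist ((F y : H)) ((y : H)) < 2⁻¹ := by
      rw [dist_comm]
      exact hF y
    linarith
  haveI hwcount : Countable ↥w := hFinj.countable
  haveI hwinf : Infinite ↥w := by
    rw [Set.infinite_coe_iff]
    intro hfin
    have hfd : FiniteDimensional ℝ (Submodule.span ℝ w) :=
      FiniteDimensional.span_of_finite ℝ hfin
    have hclosed : IsClosed ((Submodule.span ℝ w : Submodule ℝ H) : Set H) :=
      Submodule.closed_of_finiteDimensional _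
    rw [hclosed.submodule_topologicalClosure_eq] at hdspan
    apply hH
    rw [hdspan] at hfd
    exact (Submodule.topEquiv : (⊤ : Submodule ℝ H) ≃ₗ[ℝ] H).finiteDimensional
  obtain ⟨d⟩ := nonempty_denumerable_iff.mpr ⟨hwcount, hwinf⟩
  let eqv : ℕ ≃ ↥w := (@Denumerable.eqv ↥w d).symm
  set e : ℕ → H := fun n => ((eqv n : w) : H) with he
  have horth : Orthonormal ℝ e := horthw.comp eqv eqv.injective
  have hrange : Set.range e = w := by
    ext x
    constructor
    · rintro ⟨n, rfl⟩
      exact (eqv n).2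
    · intro hx
      exact ⟨eqv.symm ⟨x, hx⟩, by simp [he]⟩
  have hdense : Dense ((Submodule.span ℝ (Set.range e) : Submodule ℝ H) : Set H) := by
    rw [hrange, Submodule.dense_iff_topologicalClosure_eq_top]
    exact hdspan
  exact aux_main e horth hdense
end

section
/- Let K be an absolutely convex compact subset of a Banach space X whose linear span is infinite-dimensional. Then every bounded linear operator T on X that leaves V_K invariant (i.e., T(V_K) ⊆ V_K) lies in the closure of G(K) in the weak operator topology; that is, A_K ⊆ WG(K). -/
open Filter Topology Metric
open scoped ENNReal NNReal

/-- The Kolmogorov `n`-width of a set `K`: the infimum over all `n`-dimensional linear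
subspaces `V` of `sup_{x ∈ K} dist(x, V)` (valued in `ℝ≥0∞` to avoid junk values). -/
noncomputable def kolWidth {X : Type*} [NormedAddCommGroup X] [NormedSpace ℝ X]
    (K : Set X) (n : ℕ) : ℝ≥0∞ :=
  ⨅ (V : Submodule ℝ X) (_ : FiniteDimensional ℝ V ∧ Module.finrank ℝ V = n),
    ⨆ x ∈ K, Metric.infEDist x (V : Set X)

/-- A sequence is lacunary if `liminf aₙ₊₁/aₙ = 0`. -/
def Lacunary (a : ℕ → ℝ≥0∞) : Prop :=
  Filter.liminf (fun n => a (n + 1) / a n) Filter.atTop = 0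

open scoped Pointwise


open Filter Topology Metric
open scoped ENNReal NNReal

section Helpers

variable {X : Type*} [NormedAddCommGroup X] [NormedSpace ℝ X]

/-- absolutely convex combinations stay in a convex balanced set containing 0 -/
lemma absconv_sum_mem {K : Set X} (hconv : Convex ℝ K) (hbal : Balanced ℝ K)
    (h0 : (0 : X) ∈ K) {ι : Type*} (s : Finset ι) (c : ι → ℝ) (pp : ι → X)
    (hpp : ∀ i ∈ s, pp i ∈ K) (hc : ∑ i ∈ s, |c i| ≤ 1) :
    (∑ i ∈ s, c i • pp i) ∈ K := by
  classical
  set t := ∑ i ∈ s, |c i| with ht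
  have ht0 : 0 ≤ t := Finset.sum_nonneg fun i _ => abs_nonneg _
  rcases eq_or_lt_of_le ht0 with h | h
  · have hz : ∀ i ∈ s, c i = 0 := by
      intro i hi
      have := (Finset.sum_eq_zero_iff_of_nonneg (fun j _ => abs_nonneg (c j))).1 h.symm i hi
      exact abs_eq_zero.mp this
    have : (∑ i ∈ s, c i • pp i) = 0 := Finset.sum_eq_zero fun i hi => by
      rw [hz i hi, zero_smul]
    rw [this]; exact h0
  · have htne : t ≠ 0 := ne_of_gt h
    set z : ι → X := fun i => if c i = 0 then 0 else (c i / |c i|) • pp i with hzdef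
    have hzK : ∀ i ∈ s, z i ∈ K := by
      intro i hi
      by_cases hci : c i = 0
      · simp [hzdef, hci, h0]
      · have h1 : |c i / (|c i|)| ≤ 1 := by
          rw [abs_div, abs_abs, div_self (abs_ne_zero.mpr hci)]
        simp only [hzdef, hci, if_false]
        exact hbal _ (by rw [Real.norm_eq_abs]; exact h1) ⟨pp i, hpp i hi, rfl⟩
    have hsum : (∑ i ∈ s, c i • pp i) = ∑ i ∈ s, |c i| • z i := by
      refine Finset.sum_congr rfl fun i hi => ?_
      by_cases hci : c i = 0
      · simp [hzdef, hci]
      · simp only [hzdef, hci, if_false, smul_smul]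
        congr 1
        rw [mul_div_assoc', mul_comm, mul_div_assoc, div_self (abs_ne_zero.mpr hci), mul_one]
    have hv : (∑ i ∈ s, (|c i| / t) • z i) ∈ K := by
      refine hconv.sum_mem (fun i _ => div_nonneg (abs_nonneg _) ht0) ?_ hzK
      rw [← Finset.sum_div, ← ht, div_self htne]
    have heq : (∑ i ∈ s, c i • pp i) = t • ∑ i ∈ s, (|c i| / t) • z i := by
      rw [hsum, Finset.smul_sum]
      refine Finset.sum_congr rfl fun i hi => ?_
      rw [smul_smul, mul_div_assoc', mul_comm, mul_div_assoc, div_self htne, mul_one]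
    rw [heq]
    exact hbal t (by rw [Real.norm_eq_abs, abs_of_nonneg ht0]; exact hc) ⟨_, hv, rfl⟩

/-- every element of the span of `K` is a nonneg multiple of an element of `K` -/
lemma span_rep {K : Set X} (hconv : Convex ℝ K) (hbal : Balanced ℝ K)
    (h0 : (0 : X) ∈ K) {w : X} (hw : w ∈ Submodule.span ℝ K) :
    ∃ γ : ℝ, 0 ≤ γ ∧ ∃ p ∈ K, w = γ • p := by
  classical
  obtain ⟨n, f, g, rfl⟩ := Submodule.mem_span_set'.1 hw
  set γ := ∑ i, |f i| with hγ
  have hγ0 : 0 ≤ γ := Finset.sum_nonneg fun i _ => abs_nonneg _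
  rcases eq_or_lt_of_le hγ0 with h | h
  · refine ⟨0, le_refl _, 0, h0, ?_⟩
    have hz : ∀ i, f i = 0 := by
      intro i
      have := (Finset.sum_eq_zero_iff_of_nonneg (fun j _ => abs_nonneg (f j))).1 h.symm i
        (Finset.mem_univ i)
      exact abs_eq_zero.mp this
    simp [hz]
  · have hγne : γ ≠ 0 := ne_of_gt h
    refine ⟨γ, hγ0, γ⁻¹ • ∑ i, f i • (g i : X), ?_, ?_⟩
    · rw [Finset.smul_sum]
      have : ∀ i ∈ Finset.univ, γ⁻¹ • f i • (g i : X) = (γ⁻¹ * f i) • (g i : X) := by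
        intro i _; rw [smul_smul]
      rw [Finset.sum_congr rfl this]
      refine absconv_sum_mem hconv hbal h0 _ _ _ (fun i _ => (g i).2) ?_
      have : ∀ i ∈ Finset.univ, |γ⁻¹ * f i| = γ⁻¹ * |f i| := by
        intro i _; rw [abs_mul, abs_of_nonneg (inv_nonneg.mpr hγ0)]
      rw [Finset.sum_congr rfl this, ← Finset.mul_sum, ← hγ, inv_mul_cancel₀ hγne]
    · rw [smul_inv_smul₀ hγne]

end Helpers

section Fresh

variable {X : Type*} [NormedAddCommGroup X] [NormedSpace ℝ X]

/-- If `M` is infinite-dimensional, so is its intersection with the kernel of a map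
into a finite-dimensional space. -/
lemma inf_ker_infinite {M : Submodule ℝ X} (hM : ¬ FiniteDimensional ℝ M)
    {ι : Type*} [Fintype ι] (φ : X →ₗ[ℝ] (ι → ℝ)) :
    ¬ FiniteDimensional ℝ (M ⊓ LinearMap.ker φ : Submodule ℝ X) := by
  intro h
  apply hM
  set L : M →ₗ[ℝ] (ι → ℝ) := φ.comp M.subtype with hL
  have hker : LinearMap.ker L = Submodule.comap M.subtype (M ⊓ LinearMap.ker φ) := by
    rw [hL, LinearMap.ker_comp, Submodule.comap_inf, Submodule.comap_subtype_self, top_inf_eq]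
  have e : (LinearMap.ker L) ≃ₗ[ℝ] (M ⊓ LinearMap.ker φ : Submodule ℝ X) := by
    rw [hker]
    exact Submodule.comapSubtypeEquivOfLe inf_le_left
  have hkfd : FiniteDimensional ℝ (LinearMap.ker L) := Module.Finite.equiv e.symm
  have hrfd : FiniteDimensional ℝ (LinearMap.range L) :=
    FiniteDimensional.finiteDimensional_submodule _
  have hrank := LinearMap.lift_rank_range_add_rank_ker L
  have hlt : Cardinal.lift.{_} (Module.rank ℝ M) < Cardinal.aleph0 := by
    rw [← hrank]
    refine Cardinal.add_lt_aleph0 ?_ ?_ <;>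
      rw [Cardinal.lift_lt_aleph0] <;> exact Module.rank_lt_aleph0 ℝ _
  rw [Cardinal.lift_lt_aleph0] at hlt
  exact IsNoetherian.iff_fg.1 (IsNoetherian.iff_rank_lt_aleph0.2 hlt)

/-- pick a vector in `P` outside a finite-dimensional subspace -/
lemma exists_fresh {P W : Submodule ℝ X} (hP : ¬ FiniteDimensional ℝ P)
    (hW : FiniteDimensional ℝ W) : ∃ z, z ∈ P ∧ z ∉ W := by
  by_contra hcon
  push_neg at hcon
  exact hP (Submodule.finiteDimensional_of_le (fun z hz => hcon z hz))

/-- a family in `P` which is linearly independent modulo `W₀` -/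
lemma exists_fresh_family {P : Submodule ℝ X} (hP : ¬ FiniteDimensional ℝ P)
    (q : ℕ) (W₀ : Submodule ℝ X) (hW₀ : FiniteDimensional ℝ W₀) :
    ∃ κ : Fin q → X, (∀ i, κ i ∈ P) ∧
      ∀ c : Fin q → ℝ, (∑ i, c i • κ i) ∈ W₀ → ∀ i, c i = 0 := by
  classical
  induction q with
  | zero => exact ⟨fun i => 0, fun i => i.elim0, fun c _ i => i.elim0⟩
  | succ n ih =>
    obtain ⟨κ, hκP, hκind⟩ := ih
    haveI h1 : FiniteDimensional ℝ (Submodule.span ℝ (Set.range κ)) :=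
      FiniteDimensional.span_of_finite ℝ (Set.finite_range κ)
    have hW' : FiniteDimensional ℝ
        ((W₀ ⊔ Submodule.span ℝ (Set.range κ) : Submodule ℝ X)) :=
      Submodule.finiteDimensional_sup _ _
    obtain ⟨z, hzP, hzW⟩ := exists_fresh hP hW'
    refine ⟨Fin.cons z κ, ?_, ?_⟩
    · intro i
      refine Fin.cases ?_ ?_ i
      · exact hzP
      · intro j; simpa using hκP j
    · intro c hc
      rw [Fin.sum_univ_succ] at hc
      simp only [Fin.cons_zero, Fin.cons_succ] at hc
      have hc0 : c 0 = 0 := by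
        by_contra hne
        apply hzW
        have : z = (c 0)⁻¹ • ((c 0 • z + ∑ i, c i.succ • κ i) - ∑ i, c i.succ • κ i) := by
          simp [smul_smul, inv_mul_cancel₀ hne]
        rw [this]
        refine Submodule.smul_mem _ _ (Submodule.sub_mem _ ?_ ?_)
        · exact Submodule.mem_sup_left hc
        · refine Submodule.mem_sup_right (Submodule.sum_mem _ fun i _ => ?_)
          exact Submodule.smul_mem _ _ (Submodule.subset_span ⟨i, rfl⟩)
      have htail : (∑ i, c i.succ • κ i) ∈ W₀ := by
        rw [hc0, zero_smul, zero_add] at hc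
        exact hc
      have := hκind (fun i => c i.succ) htail
      intro i
      refine Fin.cases ?_ ?_ i
      · exact hc0
      · intro j; exact this j

end Fresh

section Proj

variable {X : Type*} [NormedAddCommGroup X] [NormedSpace ℝ X]

/-- A continuous finite-rank "projection-like" map annihilating a closed subspace `V` and
moving each of finitely many vectors into `V`-corrected position. -/
lemma exists_pi (V : Submodule ℝ X) (hVc : IsClosed (V : Set X)) (xs : Finset X) :
    ∃ π : X →L[ℝ] X, (∀ v ∈ V, π v = 0) ∧ (∀ x ∈ xs, x - π x ∈ V) := by
  classical
  haveI : IsClosed (V : Set X) := hVc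
  set mkL : X →L[ℝ] (X ⧸ V) :=
    V.mkQ.mkContinuous 1 (fun x => by
      simpa using Submodule.Quotient.norm_mk_le V x) with hmkL
  have hmkL_apply : ∀ x : X, mkL x = Submodule.Quotient.mk x := fun x => rfl
  set Wb : Submodule ℝ (X ⧸ V) := Submodule.span ℝ (mkL '' (xs : Set X)) with hWb
  haveI : FiniteDimensional ℝ Wb :=
    FiniteDimensional.span_of_finite ℝ (xs.finite_toSet.image _)
  set bb := Module.finBasis ℝ Wb with hbb
  choose w hw using fun r => Submodule.Quotient.mk_surjective V (bb r : X ⧸ V)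
  have hcoord : ∀ r, ∃ g : (X ⧸ V) →L[ℝ] ℝ, ∀ z : Wb,
      g z = (bb.coord r) z := by
    intro r
    obtain ⟨g, hg, _⟩ := exists_extension_norm_eq Wb
      (LinearMap.toContinuousLinearMap (bb.coord r))
    exact ⟨g, fun z => by simpa using hg z⟩
  choose ψb hψb using hcoord
  set π : X →L[ℝ] X := ∑ r, ((ψb r).comp mkL).smulRight (w r) with hπ
  have hπ_apply : ∀ x : X, π x = ∑ r, (ψb r (mkL x)) • (w r) := by
    intro x
    rw [hπ]
    simp [ContinuousLinearMap.sum_apply]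
  refine ⟨π, ?_, ?_⟩
  · intro v hv
    have h0 : mkL v = 0 := by
      rw [hmkL_apply, Submodule.Quotient.mk_eq_zero]
      exact hv
    rw [hπ_apply, h0]
    simp
  · intro x hx
    have hmem : mkL x ∈ Wb := Submodule.subset_span ⟨x, hx, rfl⟩
    rw [← Submodule.Quotient.mk_eq_zero, ← hmkL_apply, map_sub]
    have : mkL (π x) = mkL x := by
      rw [hπ_apply]
      rw [map_sum]
      have h1 : ∀ r, mkL ((ψb r (mkL x)) • w r) = (ψb r (mkL x)) • (bb r : X ⧸ V) := by
        intro r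
        rw [map_smul, hmkL_apply (w r), hw r]
      rw [Finset.sum_congr rfl fun r _ => h1 r]
      have h2 : ∀ r, ψb r (mkL x) = bb.repr ⟨mkL x, hmem⟩ r := by
        intro r
        rw [hψb r ⟨mkL x, hmem⟩]
        simp [Module.Basis.coord_apply]
      rw [Finset.sum_congr rfl fun r _ => by rw [h2 r]]
      have := bb.sum_repr ⟨mkL x, hmem⟩
      calc (∑ r, (bb.repr ⟨mkL x, hmem⟩) r • (bb r : X ⧸ V))
          = ((∑ r, (bb.repr ⟨mkL x, hmem⟩) r • bb r : Wb) : X ⧸ V) := by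
            push_cast [Submodule.coe_sum]
            rfl
        _ = mkL x := by rw [this]
    rw [this, sub_self]

end Proj

section Realize

variable {X : Type*} [NormedAddCommGroup X] [NormedSpace ℝ X]

/-- Every element of the closure of the span can be replaced by an element of the span with the
same values under finitely many continuous functionals. -/
lemma exists_realizer (K : Set X) {ι : Type*} [Fintype ι] (f : ι → (X →L[ℝ] ℝ))
    {y : X} (hy : y ∈ (Submodule.span ℝ K).topologicalClosure) :
    ∃ w ∈ Submodule.span ℝ K, ∀ i, f i w = f i y := by
  classical
  set φ : X →L[ℝ] (ι → ℝ) := ContinuousLinearMap.pi f with hφ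
  set Im : Submodule ℝ (ι → ℝ) :=
    Submodule.map (φ : X →ₗ[ℝ] (ι → ℝ)) (Submodule.span ℝ K) with hIm
  haveI : FiniteDimensional ℝ Im := FiniteDimensional.finiteDimensional_submodule _
  have hclosed : IsClosed (Im : Set (ι → ℝ)) := Submodule.closed_of_finiteDimensional Im
  have hy' : y ∈ closure ((Submodule.span ℝ K : Submodule ℝ X) : Set X) := by
    rw [← Submodule.topologicalClosure_coe]
    exact hy
  have hmaps : Set.MapsTo φ ((Submodule.span ℝ K : Submodule ℝ X) : Set X) (Im : Set (ι → ℝ)) :=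
    fun z hz => ⟨z, hz, rfl⟩
  have hmem : φ y ∈ closure (Im : Set (ι → ℝ)) := map_mem_closure φ.continuous hy' hmaps
  rw [hclosed.closure_eq] at hmem
  obtain ⟨w, hwspan, hwφ⟩ := hmem
  refine ⟨w, hwspan, fun i => ?_⟩
  have := congrFun hwφ i
  simpa [hφ, ContinuousLinearMap.pi_apply] using this

end Realize

section DualFam

variable {X : Type*} [NormedAddCommGroup X] [NormedSpace ℝ X]

/-- A biorthogonal system of continuous functionals for a finite linearly independent family. -/
lemma exists_dual_family {ι : Type*} [Fintype ι] [DecidableEq ι] {F : ι → X}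
    (hli : LinearIndependent ℝ F) :
    ∃ θ : ι → (X →L[ℝ] ℝ), ∀ i j, θ i (F j) = if i = j then 1 else 0 := by
  classical
  set U : Submodule ℝ X := Submodule.span ℝ (Set.range F) with hU
  haveI : FiniteDimensional ℝ U :=
    FiniteDimensional.span_of_finite ℝ (Set.finite_range F)
  set bU : Module.Basis ι ℝ U := Module.Basis.span hli with hbU
  have hθ : ∀ i, ∃ g : X →L[ℝ] ℝ, ∀ z : U, g z = (bU.coord i) z := by
    intro i
    obtain ⟨g, hg, _⟩ := exists_extension_norm_eq U
      (LinearMap.toContinuousLinearMap (bU.coord i))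
    exact ⟨g, fun z => by simpa using hg z⟩
  choose θ hθ using hθ
  refine ⟨θ, fun i j => ?_⟩
  have hFj : F j = ((bU j : U) : X) := (congrArg Subtype.val (Module.Basis.span_apply hli j)).symm
  rw [hFj, hθ i (bU j)]
  simp [Module.Basis.coord_apply, Finsupp.single_apply]
  by_cases h : i = j <;> simp [h]
  · exact fun h' => absurd h'.symm h

end DualFam

section Key

variable {X : Type*} [NormedAddCommGroup X] [NormedSpace ℝ X]

set_option maxHeartbeats 1000000 in
lemma key_construction (K : Set X) (hK : IsCompact K) (hconv : Convex ℝ K)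
    (hbal : Balanced ℝ K) (hinf : ¬ FiniteDimensional ℝ (Submodule.span ℝ K))
    (T : X →L[ℝ] X)
    (hT : ∀ x ∈ (Submodule.span ℝ K).topologicalClosure,
      T x ∈ (Submodule.span ℝ K).topologicalClosure)
    (s : Finset (X × (X →L[ℝ] ℝ))) :
    ∃ D : X →L[ℝ] X, (K ⊆ D '' K) ∧ ∀ p ∈ s, p.2 (D p.1) = p.2 (T p.1) := by
  classical
  -- 0 ∈ K
  have hKne : K.Nonempty := by
    rcases Set.eq_empty_or_nonempty K with h | h
    · exfalso
      apply hinf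
      rw [h, Submodule.span_empty]
      infer_instance
    · exact h
  obtain ⟨k₀, hk₀⟩ := hKne
  have hK0 : (0 : X) ∈ K := by
    have h1 : (0 : ℝ) • k₀ ∈ (0 : ℝ) • K := Set.smul_mem_smul_set hk₀
    have h2 := hbal 0 (by simp) h1
    simpa using h2
  -- the closed span
  set V : Submodule ℝ X := (Submodule.span ℝ K).topologicalClosure with hV
  have hVc : IsClosed (V : Set X) := Submodule.isClosed_topologicalClosure _
  have hKV : K ⊆ (V : Set X) := fun k hk =>
    Submodule.le_topologicalClosure _ (Submodule.subset_span hk)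
  have hspanV : Submodule.span ℝ K ≤ V := Submodule.le_topologicalClosure _
  -- the test functional family
  set f : {p // p ∈ s} → (X →L[ℝ] ℝ) := fun q => q.1.2 with hf
  set xs : Finset X := s.image Prod.fst with hxs
  -- the auxiliary projection-like map
  obtain ⟨π, hπV, hπxs⟩ := exists_pi V hVc xs
  set F₀ : Submodule ℝ X := Submodule.span ℝ ((fun x => x - π x) '' (xs : Set X)) with hF₀
  haveI hF₀fd : FiniteDimensional ℝ F₀ :=
    FiniteDimensional.span_of_finite ℝ (xs.finite_toSet.image _)
  have hF₀V : F₀ ≤ V := by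
    rw [hF₀, Submodule.span_le]
    rintro z ⟨x, hx, rfl⟩
    exact hπxs x hx
  set d := Module.finrank ℝ F₀ with hd
  set u : Module.Basis (Fin d) ℝ F₀ := Module.finBasis ℝ F₀ with hu
  set uX : Fin d → X := fun t => ((u t : F₀) : X) with huX
  have huXV : ∀ t, uX t ∈ V := fun t => hF₀V (u t).2
  -- realizers in the span
  choose w1' hw1'span hw1'val using fun t => exists_realizer K f (huXV t)
  choose w2' hw2'span hw2'val using fun t => exists_realizer K f (hT _ (huXV t))
  -- fresh corrections
  set φlin : X →ₗ[ℝ] ({p // p ∈ s} → ℝ) :=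
    LinearMap.pi (fun q => ((f q) : X →ₗ[ℝ] ℝ)) with hφlin
  have hP := inf_ker_infinite hinf φlin
  haveI hsp1 : FiniteDimensional ℝ (Submodule.span ℝ (Set.range w1')) :=
    FiniteDimensional.span_of_finite ℝ (Set.finite_range _)
  haveI hsp2 : FiniteDimensional ℝ (Submodule.span ℝ (Set.range w2')) :=
    FiniteDimensional.span_of_finite ℝ (Set.finite_range _)
  set W₀ : Submodule ℝ X :=
    F₀ ⊔ (Submodule.span ℝ (Set.range w1') ⊔ Submodule.span ℝ (Set.range w2')) with hW₀
  haveI hW₀fd : FiniteDimensional ℝ W₀ := by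
    haveI := Submodule.finiteDimensional_sup (Submodule.span ℝ (Set.range w1'))
      (Submodule.span ℝ (Set.range w2'))
    exact Submodule.finiteDimensional_sup _ _
  obtain ⟨κ, hκP, hκind⟩ := exists_fresh_family hP (d + d) W₀ hW₀fd
  set κS : Fin d ⊕ Fin d → X := fun b => κ (finSumFinEquiv b) with hκS
  have hκSP : ∀ b, κS b ∈ Submodule.span ℝ K ⊓ LinearMap.ker φlin := fun b => hκP _
  set w1 : Fin d → X := fun t => w1' t + κS (Sum.inl t) with hw1
  set w2 : Fin d → X := fun t => w2' t + κS (Sum.inr t) with hw2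
  have hw1span : ∀ t, w1 t ∈ Submodule.span ℝ K := fun t =>
    Submodule.add_mem _ (hw1'span t) (hκSP (Sum.inl t)).1
  have hw2span : ∀ t, w2 t ∈ Submodule.span ℝ K := fun t =>
    Submodule.add_mem _ (hw2'span t) (hκSP (Sum.inr t)).1
  have hκker : ∀ b (q : {p // p ∈ s}), f q (κS b) = 0 := by
    intro b q
    have h0 : φlin (κS b) = 0 := (hκSP b).2
    have := congrFun (congrArg (fun z => (z : {p // p ∈ s} → ℝ)) h0) q
    simpa [hφlin, LinearMap.pi_apply] using this
  have hw1val : ∀ t (q : {p // p ∈ s}), f q (w1 t) = f q (uX t) := by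
    intro t q
    rw [hw1]
    simp only [map_add, hκker (Sum.inl t) q, add_zero, hw1'val t q]
  have hw2val : ∀ t (q : {p // p ∈ s}), f q (w2 t) = f q (T (uX t)) := by
    intro t q
    rw [hw2]
    simp only [map_add, hκker (Sum.inr t) q, add_zero, hw2'val t q]
  -- the full family and its independence
  set Ftot : (Fin d ⊕ (Fin d ⊕ Fin d)) → X := Sum.elim uX (Sum.elim w1 w2) with hFtot
  have hFtot_li : LinearIndependent ℝ Ftot := by
    rw [Fintype.linearIndependent_iff]
    intro c hc
    rw [Fintype.sum_sum_type] at hc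
    have hexp : ∀ b : Fin d ⊕ Fin d,
        c (Sum.inr b) • Ftot (Sum.inr b)
          = c (Sum.inr b) • (Sum.elim w1' w2' b) + c (Sum.inr b) • κS b := by
      rintro (t | t) <;> simp [hFtot, hw1, hw2, smul_add]
    rw [Finset.sum_congr rfl fun b _ => hexp b, Finset.sum_add_distrib] at hc
    have hmem : (∑ b : Fin d ⊕ Fin d, c (Sum.inr b) • κS b) ∈ W₀ := by
      have heq : (∑ b : Fin d ⊕ Fin d, c (Sum.inr b) • κS b)
          = -(∑ a : Fin d, c (Sum.inl a) • Ftot (Sum.inl a))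
            - (∑ b : Fin d ⊕ Fin d, c (Sum.inr b) • Sum.elim w1' w2' b) := by
        have h := hc
        have h2 : (∑ b : Fin d ⊕ Fin d, c (Sum.inr b) • κS b)
            = 0 - (∑ a : Fin d, c (Sum.inl a) • Ftot (Sum.inl a))
              - (∑ b : Fin d ⊕ Fin d, c (Sum.inr b) • Sum.elim w1' w2' b) := by
          rw [← h]; abel
        simpa using h2
      rw [heq]
      refine Submodule.sub_mem _ (Submodule.neg_mem _ ?_) ?_
      · refine Submodule.sum_mem _ fun a _ => Submodule.smul_mem _ _ ?_
        have : Ftot (Sum.inl a) ∈ F₀ := by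
          simp only [hFtot, Sum.elim_inl, huX]
          exact (u a).2
        exact Submodule.mem_sup_left this
      · refine Submodule.sum_mem _ fun b _ => Submodule.smul_mem _ _ ?_
        rcases b with t | t
        · exact Submodule.mem_sup_right (Submodule.mem_sup_left
            (Submodule.subset_span ⟨t, rfl⟩))
        · exact Submodule.mem_sup_right (Submodule.mem_sup_right
            (Submodule.subset_span ⟨t, rfl⟩))
    have htrans : (∑ j : Fin (d + d), c (Sum.inr (finSumFinEquiv.symm j)) • κ j) ∈ W₀ := by
      have := Fintype.sum_equiv finSumFinEquiv
        (fun b => c (Sum.inr b) • κS b)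
        (fun j => c (Sum.inr (finSumFinEquiv.symm j)) • κ j)
        (fun b => by simp [hκS])
      rw [← this]; exact hmem
    have hczero := hκind _ htrans
    have hcr : ∀ b : Fin d ⊕ Fin d, c (Sum.inr b) = 0 := by
      intro b
      have := hczero (finSumFinEquiv b)
      simpa using this
    have huXli : LinearIndependent ℝ uX := by
      have := u.linearIndependent
      have h2 := this.map' F₀.subtype (Submodule.ker_subtype F₀)
      exact h2
    have hul : (∑ a : Fin d, c (Sum.inl a) • uX a) = 0 := by
      have hz : ∀ b : Fin d ⊕ Fin d, c (Sum.inr b) • Sum.elim w1' w2' b = 0 := fun b => by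
        rw [hcr b, zero_smul]
      have hz2 : ∀ b : Fin d ⊕ Fin d, c (Sum.inr b) • κS b = 0 := fun b => by
        rw [hcr b, zero_smul]
      rw [Finset.sum_congr rfl fun b _ => hz b, Finset.sum_congr rfl fun b _ => hz2 b] at hc
      simpa [hFtot] using hc
    have hcl := (Fintype.linearIndependent_iff.mp huXli) _ hul
    rintro (a | b)
    · exact hcl a
    · exact hcr b
  -- dual functionals
  obtain ⟨θ', hθ'⟩ := exists_dual_family hFtot_li
  set θ : Fin d → (X →L[ℝ] ℝ) := fun t => θ' (Sum.inl t) with hθ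
  have hθu : ∀ t t', θ t (uX t') = if t = t' then 1 else 0 := by
    intro t t'
    have := hθ' (Sum.inl t) (Sum.inl t')
    simp only [hFtot, Sum.elim_inl] at this
    rw [hθ]
    rw [this]
    by_cases h : t = t' <;> simp [h]
  have hθw1 : ∀ t j, θ t (w1 j) = 0 := by
    intro t j
    have := hθ' (Sum.inl t) (Sum.inr (Sum.inl j))
    simp only [hFtot, Sum.elim_inr, Sum.elim_inl] at this
    rw [hθ, this]
    simp
  have hθw2 : ∀ t j, θ t (w2 j) = 0 := by
    intro t j
    have := hθ' (Sum.inl t) (Sum.inr (Sum.inr j))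
    simp only [hFtot, Sum.elim_inr] at this
    rw [hθ, this]
    simp
  -- bound on K
  obtain ⟨R, hR⟩ := hK.isBounded.exists_norm_le
  set R0 : ℝ := max R 0 with hR0def
  have hR0 : ∀ k ∈ K, ‖k‖ ≤ R0 := fun k hk => le_trans (hR k hk) (le_max_left _ _)
  have hR0nn : 0 ≤ R0 := le_max_right _ _
  -- gauge representations
  choose γ1 hγ1nn p1 hp1K hw1rep using fun t => span_rep hconv hbal hK0 (hw1span t)
  choose γ2 hγ2nn p2 hp2K hw2rep using fun t => span_rep hconv hbal hK0 (hw2span t)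
  -- the scale α
  set C : ℝ := ∑ t, ‖θ t‖ * R0 * (γ1 t + γ2 t) with hC
  have hCnn : 0 ≤ C := Finset.sum_nonneg fun t _ =>
    mul_nonneg (mul_nonneg (norm_nonneg _) hR0nn) (add_nonneg (hγ1nn t) (hγ2nn t))
  set α : ℝ := (1 + C)⁻¹ with hα
  have h1C : (0:ℝ) < 1 + C := by linarith
  have hα0 : 0 < α := inv_pos.mpr h1C
  have hαne : α ≠ 0 := ne_of_gt hα0
  have hα1 : α ≤ 1 := by
    rw [hα]
    rw [inv_le_one_iff₀]
    right; linarith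
  have hαC : α * (1 + C) = 1 := inv_mul_cancel₀ (ne_of_gt h1C)
  -- the finite-rank correction G
  set G : X →L[ℝ] X := ∑ t, (θ t).smulRight (α • w1 t - α^2 • w2 t) with hG
  have hG_apply : ∀ x : X, G x = ∑ t, θ t x • (α • w1 t - α^2 • w2 t) := by
    intro x
    rw [hG]
    simp [ContinuousLinearMap.sum_apply]
  have hGspan : ∀ x : X, G x ∈ Submodule.span ℝ K := by
    intro x
    rw [hG_apply]
    refine Submodule.sum_mem _ fun t _ => Submodule.smul_mem _ _ ?_
    exact Submodule.sub_mem _ (Submodule.smul_mem _ _ (hw1span t))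
      (Submodule.smul_mem _ _ (hw2span t))
  have hθG : ∀ (t : Fin d) (x : X), θ t (G x) = 0 := by
    intro t x
    rw [hG_apply, map_sum]
    refine Finset.sum_eq_zero fun j _ => ?_
    rw [map_smul]
    rw [map_sub, map_smul, map_smul, hθw1 t j, hθw2 t j]
    simp
  have hGG : ∀ x : X, G (G x) = 0 := by
    intro x
    rw [hG_apply (G x)]
    refine Finset.sum_eq_zero fun t _ => ?_
    rw [hθG t x]
    simp
  -- the operators
  set D₀ : X →L[ℝ] X := α⁻¹ • (ContinuousLinearMap.id ℝ X) - (α⁻¹ * α⁻¹) • G with hD₀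
  have hD₀_apply : ∀ x : X, D₀ x = α⁻¹ • x - (α⁻¹ * α⁻¹) • G x := by
    intro x
    rw [hD₀]
    simp
  set D : X →L[ℝ] X := D₀.comp ((ContinuousLinearMap.id ℝ X) - π) + T.comp π with hD
  have hD_apply : ∀ x : X, D x = D₀ (x - π x) + T (π x) := by
    intro x
    rw [hD]
    simp
  refine ⟨D, ?_, ?_⟩
  · -- covering
    intro k hk
    set y : X := α • k + G k with hy
    have hGkspan : G k ∈ Submodule.span ℝ K := hGspan k
    have hyV : y ∈ V := by
      refine Submodule.add_mem _ (Submodule.smul_mem _ _ (hKV hk)) (hspanV hGkspan)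
    have hθbound : ∀ t, |θ t k| ≤ ‖θ t‖ * R0 := by
      intro t
      refine le_trans ((θ t).le_opNorm k) ?_
      exact mul_le_mul_of_nonneg_left (hR0 k hk) (norm_nonneg _)
    have hyK : y ∈ K := by
      have hrw : y = ∑ o : Option (Fin d ⊕ Fin d),
          (Option.rec α (fun b => Sum.rec (fun t => θ t k * α * γ1 t)
            (fun t => -(θ t k * α^2 * γ2 t)) b) o : ℝ) •
          (Option.rec k (fun b => Sum.rec (fun t => p1 t) (fun t => p2 t) b) o : X) := by
        rw [Fintype.sum_option, Fintype.sum_sum_type]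
        rw [hy, hG_apply]
        congr 1
        have hterm : ∀ t, θ t k • (α • w1 t - α^2 • w2 t)
            = (θ t k * α * γ1 t) • p1 t + (-(θ t k * α^2 * γ2 t)) • p2 t := by
          intro t
          rw [hw1rep t, hw2rep t]
          module
        rw [Finset.sum_congr rfl fun t _ => hterm t, Finset.sum_add_distrib]
      rw [hrw]
      refine absconv_sum_mem hconv hbal hK0 _ _ _ ?_ ?_
      · rintro (_ | (t | t)) _
        · exact hk
        · exact hp1K t
        · exact hp2K t
      · rw [Fintype.sum_option, Fintype.sum_sum_type]
        have hb1 : ∀ t, |θ t k * α * γ1 t| ≤ ‖θ t‖ * R0 * α * γ1 t := by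
          intro t
          rw [abs_mul, abs_mul, abs_of_nonneg (le_of_lt hα0), abs_of_nonneg (hγ1nn t)]
          have := hθbound t
          have h1 : |θ t k| * α ≤ ‖θ t‖ * R0 * α :=
            mul_le_mul_of_nonneg_right this (le_of_lt hα0)
          exact mul_le_mul_of_nonneg_right h1 (hγ1nn t)
        have hb2 : ∀ t, |(-(θ t k * α^2 * γ2 t))| ≤ ‖θ t‖ * R0 * α * γ2 t := by
          intro t
          rw [abs_neg, abs_mul, abs_mul, abs_of_nonneg (hγ2nn t),
            abs_of_nonneg (sq_nonneg α)]
          have hsq : α^2 ≤ α := by nlinarith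
          have h1 : |θ t k| * α^2 ≤ (‖θ t‖ * R0) * α :=
            mul_le_mul (hθbound t) hsq (sq_nonneg α)
              (mul_nonneg (norm_nonneg _) hR0nn)
          exact mul_le_mul_of_nonneg_right h1 (hγ2nn t)
        have : |α| + (∑ t, |θ t k * α * γ1 t| + ∑ t, |(-(θ t k * α^2 * γ2 t))|)
            ≤ α + α * C := by
          rw [abs_of_nonneg (le_of_lt hα0)]
          have hs : (∑ t, |θ t k * α * γ1 t|) + (∑ t, |(-(θ t k * α^2 * γ2 t))|)
              ≤ α * C := by
            rw [← Finset.sum_add_distrib]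
            rw [hC, Finset.mul_sum]
            refine Finset.sum_le_sum fun t _ => ?_
            have := add_le_add (hb1 t) (hb2 t)
            calc |θ t k * α * γ1 t| + |(-(θ t k * α^2 * γ2 t))|
                ≤ ‖θ t‖ * R0 * α * γ1 t + ‖θ t‖ * R0 * α * γ2 t := this
              _ = α * (‖θ t‖ * R0 * (γ1 t + γ2 t)) := by ring
          linarith
        refine le_trans this ?_
        have : α + α * C = α * (1 + C) := by ring
        rw [this, hαC]
    -- y is an exact preimage of k
    have hGy : G y = α • G k := by
      rw [hy, map_add, map_smul, hGG k, add_zero]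
    have hD₀y : D₀ y = k := by
      rw [hD₀_apply, hGy, hy]
      rw [smul_add, smul_smul, smul_smul]
      rw [inv_mul_cancel₀ hαne]
      have h2 : α⁻¹ * α⁻¹ * α = α⁻¹ := by
        field_simp
      rw [h2, one_smul]
      abel
    have hπy : π y = 0 := hπV y hyV
    refine ⟨y, hyK, ?_⟩
    rw [hD_apply, hπy, sub_zero, hD₀y, map_zero, add_zero]
  · -- matching on the finite data
    intro p hp
    set q : {p // p ∈ s} := ⟨p, hp⟩ with hq
    have hxmem : p.1 ∈ xs := Finset.mem_image_of_mem Prod.fst hp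
    have hvx : p.1 - π p.1 ∈ F₀ := Submodule.subset_span ⟨p.1, hxmem, rfl⟩
    -- the matching submodule
    set N : Submodule ℝ X := ⨅ q' : {p // p ∈ s},
      LinearMap.ker ((((f q').comp (D₀ - T)) : X →L[ℝ] ℝ) : X →ₗ[ℝ] ℝ) with hN
    have hmemN : ∀ z, z ∈ N ↔ ∀ q' : {p // p ∈ s}, f q' (D₀ z) = f q' (T z) := by
      intro z
      rw [hN]
      simp only [Submodule.mem_iInf, LinearMap.mem_ker]
      constructor
      · intro h q'
        have := h q'
        simp only [ContinuousLinearMap.coe_coe, ContinuousLinearMap.comp_apply,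
          ContinuousLinearMap.sub_apply, map_sub] at this
        linarith [this]
      · intro h q'
        simp only [ContinuousLinearMap.coe_coe, ContinuousLinearMap.comp_apply,
          ContinuousLinearMap.sub_apply, map_sub]
        rw [h q']
        ring
    -- the basis vectors satisfy the matching property
    have huXN : ∀ t, uX t ∈ N := by
      intro t
      rw [hmemN]
      intro q'
      have hGu : G (uX t) = α • w1 t - α^2 • w2 t := by
        rw [hG_apply]
        rw [Finset.sum_eq_single t]
        · rw [hθu t t]
          simp
        · intro j _ hj
          rw [hθu j t, if_neg hj, zero_smul]
        · intro h
          exact absurd (Finset.mem_univ t) h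
      rw [hD₀_apply, hGu]
      simp only [map_sub, map_smul, smul_eq_mul]
      rw [hw1val t q', hw2val t q']
      field_simp
      ring
    have hF₀N : F₀ ≤ N := by
      have hspanu : Submodule.span ℝ (Set.range uX) = F₀ := by
        have h1 := Module.Basis.span_eq u
        have h2 : Submodule.map F₀.subtype (Submodule.span ℝ (Set.range ⇑u)) =
            Submodule.span ℝ (Set.range uX) := by
          rw [Submodule.map_span]
          congr 1
          rw [← Set.range_comp]
          rfl
        rw [h1] at h2
        rw [← h2]
        simp [Submodule.map_subtype_top]
      rw [← hspanu, Submodule.span_le]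
      rintro z ⟨t, rfl⟩
      exact huXN t
    have hvxN : p.1 - π p.1 ∈ N := hF₀N hvx
    rw [hmemN] at hvxN
    have hval := hvxN q
    -- assemble
    have hfq : f q = p.2 := rfl
    rw [hD_apply]
    rw [map_add]
    have : p.2 (D₀ (p.1 - π p.1)) = p.2 (T (p.1 - π p.1)) := by
      rw [← hfq]; exact hval
    rw [this, ← map_add, ← map_add]
    congr 2
    abel


end Key


/-- If `K` is an absolutely convex compact with infinite-dimensional span in a Banach space
`X`, then every operator leaving the closed span `V_K` invariant lies in the weak operator
topology closure of `G(K) = {D : D K ⊇ K}`; i.e. `A_K ⊆ WG(K)`. -/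
theorem AK_subset_WOT_closure_of_covering
    {X : Type*} [NormedAddCommGroup X] [NormedSpace ℝ X] [CompleteSpace X]
    (K : Set X) (hK : IsCompact K) (hconv : Convex ℝ K) (hbal : Balanced ℝ K)
    (hinf : ¬ FiniteDimensional ℝ (Submodule.span ℝ K))
    (T : X →L[ℝ] X)
    (hT : ∀ x ∈ (Submodule.span ℝ K).topologicalClosure,
      T x ∈ (Submodule.span ℝ K).topologicalClosure) :
    ContinuousLinearMapWOT.ofCLM T ∈
      closure ((ContinuousLinearMapWOT.ofCLM (σ := RingHom.id ℝ) (E := X) (F := X)) '' {D : X →L[ℝ] X | K ⊆ D '' K}) := by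
  classical
  haveI : (Filter.atTop : Filter (Finset (X × (X →L[ℝ] ℝ)))).NeBot := Filter.atTop_neBot
  choose Dfun hDcov hDmatch using key_construction K hK hconv hbal hinf T hT
  have htend : Filter.Tendsto (fun s => (ContinuousLinearMapWOT.ofCLM (σ := RingHom.id ℝ) (E := X) (F := X)) (Dfun s)) Filter.atTop
      (nhds ((ContinuousLinearMapWOT.ofCLM (σ := RingHom.id ℝ) (E := X) (F := X)) T)) := by
    rw [ContinuousLinearMapWOT.tendsto_iff_forall_dual_apply_tendsto]
    intro x y
    have hev : ∀ᶠ s' in (Filter.atTop : Filter (Finset (X × (X →L[ℝ] ℝ)))),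
        y (((ContinuousLinearMapWOT.ofCLM (σ := RingHom.id ℝ) (E := X) (F := X)) T) x)
          = y (((ContinuousLinearMapWOT.ofCLM (σ := RingHom.id ℝ) (E := X) (F := X)) (Dfun s')) x) := by
      filter_upwards [Filter.eventually_ge_atTop ({(x, y)} : Finset (X × (X →L[ℝ] ℝ)))]
        with s' hs'
      have hmem : (x, y) ∈ s' := hs' (Finset.mem_singleton_self _)
      have h := hDmatch s' (x, y) hmem
      simp only [ContinuousLinearMap.toWOT_apply]
      exact h.symm
    exact Filter.Tendsto.congr' hev tendsto_const_nhds
  refine mem_closure_of_tendsto htend ?_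
  filter_upwards with s'
  exact ⟨Dfun s', hDcov s', rfl⟩
end

section
/- Let K be an absolutely convex compact subset of a Banach space X whose linear span is infinite-dimensional. Then for each finite-dimensional subspace F ⊆ X*, each finite-dimensional subspace Y ⊆ X, and each linear map N : Y → X satisfying N(Y ∩ V_K) ⊆ lin(K) (the linear span of K), there exists a bounded linear operator D on X with DK ⊇ K such that f(Dx − Nx) = 0 for every x ∈ Y and every f ∈ F. -/
open Filter Topology Metric



section RepAux
variable {X : Type*} [NormedAddCommGroup X] [NormedSpace ℝ X]

/-- membership under absolutely convex combinations -/
lemma absconv_sum_mem_s2 {K : Set X} (hconv : Convex ℝ K) (hbal : Balanced ℝ K)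
    (h0 : (0:X) ∈ K) {n : ℕ} (a : Fin n → ℝ) (k : Fin n → X)
    (hk : ∀ i, k i ∈ K) (ha : ∑ i, |a i| ≤ 1) :
    (∑ i, a i • k i) ∈ K := by
  classical
  set z : Fin n → X := fun i => (if a i = 0 then (0:ℝ) else a i / |a i|) • k i with hz
  have hzK : ∀ i, z i ∈ K := by
    intro i
    refine hbal.smul_mem ?_ (hk i)
    by_cases h : a i = 0
    · simp [h]
    · simp only [if_neg h]
      rw [Real.norm_eq_abs, abs_div, abs_abs, div_self (abs_ne_zero.2 h)]
  have hrw : ∀ i, a i • k i = |a i| • z i := by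
    intro i
    by_cases h : a i = 0
    · simp [hz, h]
    · simp only [hz, if_neg h, smul_smul]
      congr 1
      field_simp
  -- use Convex.sum_mem over Option (Fin n)
  have := hconv.sum_mem (t := (Finset.univ : Finset (Option (Fin n))))
    (w := fun o => Option.elim o (1 - ∑ i, |a i|) (fun i => |a i|))
    (z := fun o => Option.elim o 0 z)
    (by rintro (_|i) _
        · simpa using ha
        · simpa using abs_nonneg (a i))
    (by simp)
    (by rintro (_|i) _
        · simpa using h0
        · simpa using hzK i)
  simp only [Fintype.sum_option] at this
  simpa [hrw] using this

/-- A representation of `v` as a combination of elements of `K` with ℓ¹-weight `≤ r`. -/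
def KRep (K : Set X) (v : X) (r : ℝ) : Prop :=
  ∃ (n : ℕ) (a : Fin n → ℝ) (k : Fin n → X),
    (∀ i, k i ∈ K) ∧ v = ∑ i, a i • k i ∧ ∑ i, |a i| ≤ r

namespace KRep

variable {K : Set X} {v w : X} {r s : ℝ}

lemma zero (K : Set X) : KRep K (0:X) 0 :=
  ⟨0, ![], ![], by simp, by simp, by simp⟩

lemma of_mem (hv : v ∈ K) : KRep K v 1 :=
  ⟨1, ![1], ![v], by simpa, by simp, by simp⟩

lemma mono (h : KRep K v r) (hrs : r ≤ s) : KRep K v s := by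
  obtain ⟨n, a, k, h1, h2, h3⟩ := h
  exact ⟨n, a, k, h1, h2, h3.trans hrs⟩

lemma smul (h : KRep K v r) (c : ℝ) : KRep K (c • v) (|c| * r) := by
  obtain ⟨n, a, k, h1, h2, h3⟩ := h
  refine ⟨n, fun i => c * a i, k, h1, ?_, ?_⟩
  · simp [h2, Finset.smul_sum, smul_smul]
  · calc ∑ i, |c * a i| = |c| * ∑ i, |a i| := by simp [abs_mul, Finset.mul_sum]
    _ ≤ |c| * r := by
        exact mul_le_mul_of_nonneg_left h3 (abs_nonneg c)

lemma add (hv : KRep K v r) (hw : KRep K w s) : KRep K (v + w) (r + s) := by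
  obtain ⟨n, a, k, h1, h2, h3⟩ := hv
  obtain ⟨n', b, j, g1, g2, g3⟩ := hw
  classical
  refine ⟨n + n', fun i => Sum.elim a b (finSumFinEquiv.symm i),
    fun i => Sum.elim k j (finSumFinEquiv.symm i), ?_, ?_, ?_⟩
  · intro i
    rcases h : finSumFinEquiv.symm i with x | x <;> simp [h, h1, g1]
  · have e1 : ∑ i : Fin (n + n'),
        (Sum.elim a b (finSumFinEquiv.symm i)) • (Sum.elim k j (finSumFinEquiv.symm i))
        = ∑ x : Fin n ⊕ Fin n', Sum.elim a b x • Sum.elim k j x :=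
      Fintype.sum_equiv finSumFinEquiv.symm _ _ (fun i => rfl)
    rw [e1, Fintype.sum_sum_type]
    simp [h2, g2]
  · have e1 : ∑ i : Fin (n + n'), |Sum.elim a b (finSumFinEquiv.symm i)|
        = ∑ x : Fin n ⊕ Fin n', |Sum.elim a b x| :=
      Fintype.sum_equiv finSumFinEquiv.symm _ _ (fun i => rfl)
    rw [e1, Fintype.sum_sum_type]
    simpa using add_le_add h3 g3

lemma sum {ι : Type*} (t : Finset ι) (f : ι → X) (ρ : ι → ℝ)
    (h : ∀ i ∈ t, KRep K (f i) (ρ i)) : KRep K (∑ i ∈ t, f i) (∑ i ∈ t, ρ i) := by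
  classical
  induction t using Finset.induction_on with
  | empty => simpa using KRep.zero K
  | @insert i t hi ih =>
      rw [Finset.sum_insert hi, Finset.sum_insert hi]
      exact (h i (Finset.mem_insert_self i t)).add
        (ih fun j hj => h j (Finset.mem_insert_of_mem hj))

lemma mem_of_rep_one (hconv : Convex ℝ K) (hbal : Balanced ℝ K) (h0 : (0:X) ∈ K)
    (h : KRep K v 1) : v ∈ K := by
  obtain ⟨n, a, k, h1, h2, h3⟩ := h
  exact h2 ▸ absconv_sum_mem_s2 hconv hbal h0 a k h1 h3

end KRep

/-- every element of the span has some representation -/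
lemma rep_of_mem_span {K : Set X} (h0 : (0:X) ∈ K) {v : X}
    (hv : v ∈ Submodule.span ℝ K) : ∃ r : ℝ, 0 ≤ r ∧ KRep K v r := by
  induction hv using Submodule.span_induction with
  | mem x hx => exact ⟨1, zero_le_one, KRep.of_mem hx⟩
  | zero => exact ⟨0, le_refl _, KRep.zero K⟩
  | add x y _ _ hx hy =>
      obtain ⟨r, hr, hrep⟩ := hx
      obtain ⟨s, hs, hsrep⟩ := hy
      exact ⟨r + s, by linarith, hrep.add hsrep⟩
  | smul c x _ hx =>
      obtain ⟨r, hr, hrep⟩ := hx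
      exact ⟨|c| * r, mul_nonneg (abs_nonneg c) hr, hrep.smul c⟩

end RepAux


section Aux2

/-- In a normed real space, a finite linearly independent family admits a biorthogonal
family of continuous linear functionals. -/
lemma exists_biorth {E : Type*} [NormedAddCommGroup E] [NormedSpace ℝ E]
    {ι : Type*} [Fintype ι] [DecidableEq ι] {v : ι → E} (hv : LinearIndependent ℝ v) :
    ∃ φ : ι → (E →L[ℝ] ℝ), ∀ i j, φ i (v j) = if i = j then 1 else 0 := by
  classical
  set W : Submodule ℝ E := Submodule.span ℝ (Set.range v) with hW
  haveI : FiniteDimensional ℝ W := FiniteDimensional.span_of_finite ℝ (Set.finite_range v)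
  set b : Module.Basis ι ℝ W := Module.Basis.span hv with hb
  have hφ : ∀ i : ι, ∃ g : E →L[ℝ] ℝ,
      ∀ x : W, g x = (LinearMap.toContinuousLinearMap (b.coord i)) x := by
    intro i
    obtain ⟨g, hg, -⟩ := exists_extension_norm_eq W
      (LinearMap.toContinuousLinearMap (b.coord i))
    exact ⟨g, hg⟩
  choose φ hφ using hφ
  refine ⟨φ, fun i j => ?_⟩
  have hvj : v j ∈ W := Submodule.subset_span ⟨j, rfl⟩
  have h1 : φ i (v j) = (b.coord i) ⟨v j, hvj⟩ := by
    have := hφ i ⟨v j, hvj⟩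
    simpa using this
  have h2 : (⟨v j, hvj⟩ : W) = b j := by
    apply Subtype.ext
    simp only [hb]
    rw [Module.Basis.span_apply]
  rw [h1, h2, Module.Basis.coord_apply, Module.Basis.repr_self]
  simp [Finsupp.single_apply, eq_comm]

/-- a non-finite-dimensional vector space contains finite independent families of any size -/
lemma exists_linearIndependent_fin {M : Type*} [AddCommGroup M] [Module ℝ M]
    (h : ¬ FiniteDimensional ℝ M) (m : ℕ) :
    ∃ u : Fin m → M, LinearIndependent ℝ u := by
  classical
  set B := Module.Basis.ofVectorSpace ℝ M
  haveI : Infinite (Module.Basis.ofVectorSpaceIndex ℝ M) := by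
    rw [← not_finite_iff_infinite]
    intro hf
    exact h (Module.Finite.of_basis B)
  set e : Fin m ↪ Module.Basis.ofVectorSpaceIndex ℝ M :=
    (Fin.valEmbedding.trans (Infinite.natEmbedding _))
  exact ⟨B ∘ e, B.linearIndependent.comp e e.injective⟩

/-- finite-dimensionality from a linear map with f.d. kernel into a f.d. space -/
lemma fd_of_ker_fd {M N : Type*} [AddCommGroup M] [Module ℝ M] [AddCommGroup N] [Module ℝ N]
    (f : M →ₗ[ℝ] N) (hker : FiniteDimensional ℝ (LinearMap.ker f))
    (hN : FiniteDimensional ℝ N) : FiniteDimensional ℝ M := by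
  haveI := hker; haveI := hN
  haveI : FiniteDimensional ℝ (LinearMap.range f) := inferInstance
  haveI : FiniteDimensional ℝ (M ⧸ LinearMap.ker f) :=
    LinearEquiv.finiteDimensional (f.quotKerEquivRange).symm
  have hrank : Module.rank ℝ M < Cardinal.aleph0 := by
    rw [← Submodule.rank_quotient_add_rank (LinearMap.ker f)]
    exact Cardinal.add_lt_aleph0 (Module.rank_lt_aleph0 ℝ _) (Module.rank_lt_aleph0 ℝ _)
  exact IsNoetherian.iff_fg.1 (IsNoetherian.iff_rank_lt_aleph0.2 hrank)

end Aux2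


set_option maxHeartbeats 12000000 in
set_option synthInstance.maxHeartbeats 400000 in
/-- For an absolutely convex compact `K` with infinite-dimensional span in a Banach space `X`,
any finite-dimensional subspace `F ⊆ X*`, finite-dimensional subspace `Y ⊆ X` and linear map
`N : Y → X` with `N(Y ∩ V_K) ⊆ lin K`, there is `D` covering `K` with `D - N` annihilated
by `F` on `Y`. -/
theorem exists_covering_operator_matching_on_finite_dims
    {X : Type*} [NormedAddCommGroup X] [NormedSpace ℝ X] [CompleteSpace X]
    (K : Set X) (hK : IsCompact K) (hconv : Convex ℝ K) (hbal : Balanced ℝ K)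
    (hinf : ¬ FiniteDimensional ℝ (Submodule.span ℝ K))
    (F : Submodule ℝ (X →L[ℝ] ℝ)) (hF : FiniteDimensional ℝ F)
    (Y : Submodule ℝ X) (hY : FiniteDimensional ℝ Y)
    (N : Y →ₗ[ℝ] X)
    (hN : ∀ y : Y, (y : X) ∈ (Submodule.span ℝ K).topologicalClosure →
      N y ∈ Submodule.span ℝ K) :
    ∃ D : X →L[ℝ] X, K ⊆ D '' K ∧
      ∀ y : Y, ∀ f ∈ F, f (D y - N y) = 0 := by
  classical
  haveI := hF; haveI := hY
  set L : Submodule ℝ X := Submodule.span ℝ K with hL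
  set V : Submodule ℝ X := L.topologicalClosure with hV
  have hKL : K ⊆ (L : Set X) := Submodule.subset_span
  have hLV : L ≤ V := Submodule.le_topologicalClosure L
  haveI hVclosed : IsClosed (V : Set X) := Submodule.isClosed_topologicalClosure L
  -- K is nonempty and contains 0
  have hKne : K.Nonempty := by
    by_contra h
    rw [Set.not_nonempty_iff_eq_empty] at h
    apply hinf
    have hLbot : L = ⊥ := by rw [hL, h, Submodule.span_empty]
    rw [hLbot]
    infer_instance
  have h0K : (0:X) ∈ K := by
    obtain ⟨k, hk⟩ := hKne
    simpa using hbal.smul_mem (a := (0:ℝ)) (by simp) hk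
  -- bound for K
  obtain ⟨R₀, hR₀⟩ : ∃ R, ∀ k ∈ K, ‖k‖ ≤ R := by
    obtain ⟨r, hr⟩ := (Metric.isBounded_iff_subset_closedBall 0).1 hK.isBounded
    exact ⟨r, fun k hk => by simpa [Metric.mem_closedBall, dist_zero_right] using hr hk⟩
  have hR₀0 : 0 ≤ R₀ := le_trans (by simp) (hR₀ 0 h0K)
  -- basis of F and the evaluation map Φ
  set n := Module.finrank ℝ F with hn
  haveI : Module.Free ℝ F := Module.Free.of_divisionRing ℝ F
  set fb : Module.Basis (Fin n) ℝ F := Module.finBasis ℝ F with hfb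
  set Φ : X →ₗ[ℝ] (Fin n → ℝ) :=
    LinearMap.pi (fun i => ((fb i : X →L[ℝ] ℝ) : X →ₗ[ℝ] ℝ)) with hΦ
  have hΦapp : ∀ x i, Φ x i = (fb i : X →L[ℝ] ℝ) x := fun x i => rfl
  have hΦcont : Continuous Φ := by
    apply continuous_pi
    intro i
    exact (fb i : X →L[ℝ] ℝ).continuous
  -- f ∈ F is determined by Φ
  have fF : ∀ f ∈ F, ∀ x : X, Φ x = 0 → f x = 0 := by
    intro f hf x hx
    have hrepr := fb.sum_repr ⟨f, hf⟩
    have hfx := congrArg (fun g : F => (g : X →L[ℝ] ℝ) x) hrepr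
    simp only [AddSubmonoidClass.coe_finset_sum, ContinuousLinearMap.coe_sum',
      Finset.sum_apply, Submodule.coe_smul, ContinuousLinearMap.coe_smul',
      Pi.smul_apply] at hfx
    have : f x = ∑ i, (fb.repr ⟨f, hf⟩ i) • ((fb i : X →L[ℝ] ℝ) x) := hfx.symm
    rw [this]
    apply Finset.sum_eq_zero
    intro i _
    have : (fb i : X →L[ℝ] ℝ) x = Φ x i := rfl
    rw [this, hx]
    simp
  -- f ∈ F determined by Φ (two-point version)
  have fF2 : ∀ f ∈ F, ∀ x x' : X, Φ x = Φ x' → f x = f x' := by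
    intro f hf x x' hxx
    have := fF f hf (x - x') (by rw [map_sub, hxx, sub_self])
    have h2 : f (x - x') = f x - f x' := by rw [map_sub]
    rw [h2] at this
    linarith
  -- decomposition of Y
  set Y1 : Submodule ℝ X := Y ⊓ V with hY1
  set Yc : Submodule ℝ Y := Y1.comap Y.subtype with hYc
  obtain ⟨Yc', hcompl⟩ := Yc.exists_isCompl
  set m := Module.finrank ℝ Yc with hm
  set e := Module.finrank ℝ Yc' with he
  set bc : Module.Basis (Fin m) ℝ Yc := Module.finBasis ℝ Yc with hbc
  set bc' : Module.Basis (Fin e) ℝ Yc' := Module.finBasis ℝ Yc' with hbc'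
  set BY : Module.Basis (Fin m ⊕ Fin e) ℝ Y :=
    (bc.prod bc').map (Yc.prodEquivOfIsCompl Yc' hcompl) with hBY
  have hBYinl : ∀ l, BY (Sum.inl l) ∈ Yc := by
    intro l
    rw [hBY]
    simp only [Module.Basis.map_apply]
    rw [show ((bc.prod bc') (Sum.inl l)) = ((bc l : Yc), (0 : Yc')) from
      Prod.ext (Module.Basis.prod_apply_inl_fst _ _ _) (Module.Basis.prod_apply_inl_snd _ _ _)]
    rw [Submodule.coe_prodEquivOfIsCompl']
    simp
  have hBYinr : ∀ j, BY (Sum.inr j) ∈ Yc' := by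
    intro j
    rw [hBY]
    simp only [Module.Basis.map_apply]
    rw [show ((bc.prod bc') (Sum.inr j)) = ((0 : Yc), (bc' j : Yc')) from
      Prod.ext (Module.Basis.prod_apply_inr_fst _ _ _) (Module.Basis.prod_apply_inr_snd _ _ _)]
    rw [Submodule.coe_prodEquivOfIsCompl']
    simp
  set ys : Fin m → X := fun l => ((BY (Sum.inl l) : Y) : X) with hys
  set zs : Fin e → X := fun j => ((BY (Sum.inr j) : Y) : X) with hzs
  have hysV : ∀ l, ys l ∈ V := by
    intro l
    have := hBYinl l
    rw [hYc, Submodule.mem_comap] at this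
    exact this.2
  -- the quotient by V and functionals η
  have hmkbound : ∀ x : X, ‖(Submodule.Quotient.mk x : X ⧸ V)‖ ≤ 1 * ‖x‖ := by
    intro x
    simpa using Submodule.Quotient.norm_mk_le (S := V) x
  set mkC : X →L[ℝ] (X ⧸ V) := LinearMap.mkContinuous V.mkQ 1 hmkbound with hmkC
  have hmkCapp : ∀ x : X, mkC x = Submodule.Quotient.mk x := fun x => rfl
  -- the images of zs in the quotient are independent
  have hzind : LinearIndependent ℝ (fun j : Fin e => (Submodule.Quotient.mk (zs j) : X ⧸ V)) := by
    rw [Fintype.linearIndependent_iff]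
    intro g hg
    have hsum : (∑ j, g j • zs j) ∈ V := by
      rw [← Submodule.Quotient.mk_eq_zero V]
      have h1 : (Submodule.Quotient.mk (∑ j, g j • zs j) : X ⧸ V)
          = ∑ j, g j • (Submodule.Quotient.mk (zs j) : X ⧸ V) := by
        rw [← Submodule.mkQ_apply, map_sum]
        exact Finset.sum_congr rfl fun j _ => by rw [map_smul, Submodule.mkQ_apply]
      rw [h1, hg]
    set w : Y := ∑ j, g j • BY (Sum.inr j) with hw
    have hwcoe : (w : X) = ∑ j, g j • zs j := by
      rw [hw]
      simp only [AddSubmonoidClass.coe_finset_sum, SetLike.val_smul]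
      rfl
    have hwYc : w ∈ Yc := by
      rw [hYc, Submodule.mem_comap]
      exact ⟨by simp, by rw [Submodule.subtype_apply, hwcoe]; exact hsum⟩
    have hwYc' : w ∈ Yc' := by
      rw [hw]
      exact Submodule.sum_mem _ fun j _ => Submodule.smul_mem _ _ (hBYinr j)
    have hw0 : w = 0 := by
      have := hcompl.inf_eq_bot
      have hmem : w ∈ Yc ⊓ Yc' := ⟨hwYc, hwYc'⟩
      rw [this] at hmem
      simpa using hmem
    have hindr : LinearIndependent ℝ (fun j : Fin e => BY (Sum.inr j)) :=
      BY.linearIndependent.comp Sum.inr Sum.inr_injective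
    rw [Fintype.linearIndependent_iff] at hindr
    exact hindr g (by rw [← hw]; exact hw0)
  obtain ⟨η', hη'⟩ := exists_biorth hzind
  set η : Fin e → (X →L[ℝ] ℝ) := fun j => (η' j).comp mkC with hη
  have hηV : ∀ (j) (x : X), x ∈ V → η j x = 0 := by
    intro j x hx
    rw [hη]
    simp only [ContinuousLinearMap.comp_apply, hmkCapp]
    rw [(Submodule.Quotient.mk_eq_zero V).2 hx]
    simp
  have hηz : ∀ j j', η j (zs j') = if j = j' then 1 else 0 := by
    intro j j'
    rw [hη]
    simp only [ContinuousLinearMap.comp_apply, hmkCapp]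
    exact hη' j j'
  -- L ⊓ ker Φ is infinite dimensional
  set SP : Submodule ℝ X := LinearMap.ker Φ with hSP
  set L' : Submodule ℝ X := L ⊓ SP with hL'
  have hL'le : L' ≤ L := inf_le_left
  have hL'inf : ¬ FiniteDimensional ℝ L' := by
    intro hfd
    apply hinf
    refine fd_of_ker_fd (Φ.comp L.subtype) ?_ inferInstance
    have hker : LinearMap.ker (Φ.comp L.subtype) = L'.comap L.subtype := by
      ext x
      simp only [LinearMap.mem_ker, LinearMap.comp_apply, Submodule.mem_comap,
        Submodule.subtype_apply, hL', Submodule.mem_inf, hSP]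
      exact ⟨fun h => ⟨x.2, h⟩, fun h => h.2⟩
    rw [hker]
    haveI := hfd
    exact LinearEquiv.finiteDimensional (Submodule.comapSubtypeEquivOfLe hL'le).symm
  -- the image of L' in X ⧸ Y is infinite dimensional
  set q : X →ₗ[ℝ] X ⧸ Y := Y.mkQ with hq
  set Im : Submodule ℝ (X ⧸ Y) := L'.map q with hIm
  have hImmem : ∀ x ∈ L', q x ∈ Im := fun x hx => Submodule.mem_map_of_mem hx
  have hIminf : ¬ FiniteDimensional ℝ Im := by
    intro hfd
    apply hL'inf
    refine fd_of_ker_fd ((q.comp L'.subtype).codRestrict Im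
      (fun x => hImmem _ x.2)) ?_ hfd
    rw [LinearMap.ker_codRestrict]
    have hker : LinearMap.ker (q.comp L'.subtype) = (L' ⊓ Y).comap L'.subtype := by
      ext x
      simp only [LinearMap.mem_ker, LinearMap.comp_apply, Submodule.mem_comap,
        Submodule.subtype_apply, Submodule.mem_inf, hq, Submodule.mkQ_apply,
        Submodule.Quotient.mk_eq_zero]
      exact ⟨fun h => ⟨x.2, h⟩, fun h => h.2⟩
    rw [hker]
    haveI : FiniteDimensional ℝ (L' ⊓ Y : Submodule ℝ X) :=
      Submodule.finiteDimensional_of_le inf_le_right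
    exact LinearEquiv.finiteDimensional (Submodule.comapSubtypeEquivOfLe inf_le_left).symm
  -- pick independent vectors u i in L', independent modulo Y
  obtain ⟨u', hu'⟩ := exists_linearIndependent_fin hIminf m
  have hpick : ∀ i : Fin m, ∃ x : X, x ∈ L' ∧ q x = (u' i : X ⧸ Y) := by
    intro i
    obtain ⟨x, hx, hqx⟩ := Submodule.mem_map.1 (u' i).2
    exact ⟨x, hx, hqx⟩
  choose u huL' huq using hpick
  have hqu : LinearIndependent ℝ (fun i => q (u i)) := by
    have h1 : (fun i => q (u i)) = (fun i : Fin m => ((u' i : Im) : X ⧸ Y)) := by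
      funext i
      exact huq i
    rw [h1]
    exact hu'.map' Im.subtype (Submodule.ker_subtype Im)
  have huind : LinearIndependent ℝ u := LinearIndependent.of_comp q hqu
  -- combined family and biorthogonal functionals ζ
  set G : ((Fin m ⊕ Fin e) ⊕ Fin m) → X := Sum.elim (fun s => ((BY s : Y) : X)) u with hG
  have hGind : LinearIndependent ℝ G := by
    rw [hG, linearIndependent_sum]
    refine ⟨BY.linearIndependent.map' Y.subtype (Submodule.ker_subtype Y), huind, ?_⟩
    rw [Submodule.disjoint_def]
    intro x hx1 hx2
    have hxY : x ∈ Y := by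
      have h1 : Submodule.span ℝ (Set.range (fun s : Fin m ⊕ Fin e => ((BY s : Y) : X))) ≤ Y := by
        rw [Submodule.span_le]
        rintro _ ⟨s, rfl⟩
        exact (BY s).2
      exact h1 hx1
    obtain ⟨cfun, hcfun⟩ := (Submodule.mem_span_range_iff_exists_fun ℝ).1 hx2
    simp only [Function.comp_def, Sum.elim_inr] at hcfun
    have hqx : q x = 0 := by
      rw [hq, Submodule.mkQ_apply, Submodule.Quotient.mk_eq_zero]
      exact hxY
    have hsum : ∑ i, cfun i • (q (u i)) = 0 := by
      have h2 : ∑ i, cfun i • (q (u i)) = q (∑ i, cfun i • u i) := by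
        rw [map_sum]
        exact Finset.sum_congr rfl fun i _ => (map_smul q _ _).symm
      rw [h2, hcfun, hqx]
    rw [Fintype.linearIndependent_iff] at hqu
    have hc0 : ∀ i, cfun i = 0 := hqu cfun hsum
    rw [← hcfun]
    simp [hc0]
  obtain ⟨φ, hφ⟩ := exists_biorth hGind
  set ζ : Fin m → (X →L[ℝ] ℝ) := fun l => φ (Sum.inl (Sum.inl l)) + φ (Sum.inr l) with hζ
  have hζy : ∀ l s, ζ l (ys s) = if l = s then 1 else 0 := by
    intro l s
    have h1 := hφ (Sum.inl (Sum.inl l)) (Sum.inl (Sum.inl s))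
    have h2 := hφ (Sum.inr l) (Sum.inl (Sum.inl s))
    simp only [hG, Sum.elim_inl] at h1 h2
    rw [hζ]
    simp only [ContinuousLinearMap.add_apply, hys]
    rw [h1, h2]
    simp [Sum.inl.injEq]
  have hζz : ∀ l j, ζ l (zs j) = 0 := by
    intro l j
    have h1 := hφ (Sum.inl (Sum.inl l)) (Sum.inl (Sum.inr j))
    have h2 := hφ (Sum.inr l) (Sum.inl (Sum.inr j))
    simp only [hG, Sum.elim_inl] at h1 h2
    rw [hζ]
    simp only [ContinuousLinearMap.add_apply, hzs]
    rw [h1, h2]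
    simp
  have hζu : ∀ l i, ζ l (u i) = if l = i then 1 else 0 := by
    intro l i
    have h1 := hφ (Sum.inl (Sum.inl l)) (Sum.inr i)
    have h2 := hφ (Sum.inr l) (Sum.inr i)
    simp only [hG, Sum.elim_inr] at h1 h2
    rw [hζ]
    simp only [ContinuousLinearMap.add_apply]
    rw [h1, h2]
    simp [Sum.inr.injEq]
  -- choose representatives vv l ∈ L with the same F-data as ys l
  have hvex : ∀ l, ∃ v, v ∈ L ∧ Φ v = Φ (ys l) := by
    intro l
    set Λ : Submodule ℝ (Fin n → ℝ) := L.map Φ with hΛ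
    haveI : FiniteDimensional ℝ Λ := FiniteDimensional.finiteDimensional_submodule Λ
    have hΛclosed : IsClosed (Λ : Set (Fin n → ℝ)) := Submodule.closed_of_finiteDimensional Λ
    have h1 : ys l ∈ closure (L : Set X) := by
      have h : ys l ∈ (L.topologicalClosure : Set X) := hysV l
      rwa [Submodule.topologicalClosure_coe] at h
    have h2 : Φ (ys l) ∈ closure (Φ '' (L : Set X)) := by
      have := image_closure_subset_closure_image (s := (L : Set X)) hΦcont
      exact this ⟨ys l, h1, rfl⟩
    have h3 : Φ (ys l) ∈ Λ := by
      have hcar : Φ '' (L : Set X) = (Λ : Set (Fin n → ℝ)) := (Submodule.map_coe Φ L).symm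
      rw [hcar, hΛclosed.closure_eq] at h2
      exact h2
    obtain ⟨v, hvL, hvΦ⟩ := Submodule.mem_map.1 h3
    exact ⟨v, hvL, hvΦ⟩
  choose vv hvvL hvvΦ using hvex
  -- the values of N on the V-part of the basis lie in L
  set ww : Fin m → X := fun l => N (BY (Sum.inl l)) with hww
  have hwwL : ∀ l, ww l ∈ L := by
    intro l
    rw [hww]
    exact hN _ (hysV l)
  have huL : ∀ i, u i ∈ L := fun i => hL'le (huL' i)
  have huSP : ∀ i, Φ (u i) = 0 := fun i => (huL' i).2
  -- representations of all ingredients as combinations of K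
  have hrepv := fun l => rep_of_mem_span h0K (hvvL l)
  choose rv hrv0 hrvrep using hrepv
  have hrepw := fun l => rep_of_mem_span h0K (hwwL l)
  choose rw' hrw0 hrwrep using hrepw
  have hrepu := fun i => rep_of_mem_span h0K (huL i)
  choose ru hru0 hrurep using hrepu
  -- bounds for ζ on K
  set sζ : Fin m → ℝ := fun l => ‖ζ l‖ * R₀ with hsζdef
  have hsζ : ∀ l, ∀ k ∈ K, |ζ l k| ≤ sζ l := by
    intro l k hk
    calc |ζ l k| = ‖ζ l k‖ := (Real.norm_eq_abs _).symm
    _ ≤ ‖ζ l‖ * ‖k‖ := (ζ l).le_opNorm k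
    _ ≤ ‖ζ l‖ * R₀ := by
        exact mul_le_mul_of_nonneg_left (hR₀ k hk) (norm_nonneg _)
  have hsζ0 : ∀ l, 0 ≤ sζ l := fun l => mul_nonneg (norm_nonneg _) hR₀0
  -- constants
  set Cl : Fin m → ℝ := fun l =>
    rw' l + rv l + ∑ i, (|ζ i (vv l)| + |ζ i (ww l)|) * ru i with hCl
  have hCl0 : ∀ l, 0 ≤ Cl l := by
    intro l
    have : 0 ≤ ∑ i, (|ζ i (vv l)| + |ζ i (ww l)|) * ru i :=
      Finset.sum_nonneg fun i _ =>
        mul_nonneg (add_nonneg (abs_nonneg _) (abs_nonneg _)) (hru0 i)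
    have := add_nonneg (add_nonneg (hrw0 l) (hrv0 l)) this
    simpa [hCl, add_assoc] using this
  set SB : ℝ := ∑ l, sζ l * Cl l with hSB
  have hSB0 : 0 ≤ SB :=
    Finset.sum_nonneg fun l _ => mul_nonneg (hsζ0 l) (hCl0 l)
  set c : ℝ := 1 + SB with hc
  have hc1 : (1:ℝ) ≤ c := by rw [hc]; linarith
  have hc0 : (0:ℝ) < c := lt_of_lt_of_le one_pos hc1
  have hcne : c ≠ 0 := ne_of_gt hc0
  -- the correction vectors
  set t : Fin m → X := fun l =>
    ww l + (-c) • vv l + ∑ i, (c * ζ i (vv l) - ζ i (ww l)) • u i with ht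
  set t' : Fin e → X := fun j => N (BY (Sum.inr j)) + (-c) • zs j with ht'
  have htL : ∀ l, t l ∈ L := by
    intro l
    rw [ht]
    refine Submodule.add_mem _ (Submodule.add_mem _ (hwwL l)
      (Submodule.smul_mem _ _ (hvvL l))) ?_
    exact Submodule.sum_mem _ fun i _ => Submodule.smul_mem _ _ (huL i)
  have htV : ∀ l, t l ∈ V := fun l => hLV (htL l)
  -- ζ annihilates the corrections
  have hζt : ∀ s l, ζ s (t l) = 0 := by
    intro s l
    rw [ht]
    simp only [map_add, map_smul, map_sum, smul_eq_mul]
    have h1 : ∀ i, (c * ζ i (vv l) - ζ i (ww l)) * ζ s (u i)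
        = if s = i then c * ζ s (vv l) - ζ s (ww l) else 0 := by
      intro i
      rw [hζu s i]
      by_cases h : s = i
      · subst h; simp
      · simp [h]
    rw [Finset.sum_congr rfl fun i _ => h1 i, Finset.sum_ite_eq]
    simp
    ring
  -- F-data of the corrections
  have hft : ∀ f ∈ F, ∀ l, f (t l) = f (ww l) - c * f (ys l) := by
    intro f hf l
    rw [ht]
    simp only [map_add, map_smul, map_sum, smul_eq_mul]
    have h1 : ∀ i, f (u i) = 0 := fun i => fF f hf (u i) (huSP i)
    have h2 : f (vv l) = f (ys l) := fF2 f hf _ _ (hvvΦ l)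
    simp only [h1, mul_zero, Finset.sum_const_zero, h2]
    ring
  -- the operator
  set S1 : X →L[ℝ] X := ∑ l, (ζ l).smulRight (t l) with hS1
  set S2 : X →L[ℝ] X := ∑ j, (η j).smulRight (t' j) with hS2
  set D : X →L[ℝ] X := c • ContinuousLinearMap.id ℝ X + S1 + S2 with hD
  have hDapp : ∀ x : X, D x = c • x + ∑ l, ζ l x • t l + ∑ j, η j x • t' j := by
    intro x
    rw [hD, hS1, hS2]
    simp [ContinuousLinearMap.sum_apply, ContinuousLinearMap.smulRight_apply]
  have hft' : ∀ (f : X →L[ℝ] ℝ) (j), f (t' j) = f (N (BY (Sum.inr j))) - c * f (zs j) := by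
    intro f j
    rw [ht']
    simp only [map_add, map_smul, smul_eq_mul]
    ring
  refine ⟨D, ?_, ?_⟩
  · -- covering: K ⊆ D '' K
    intro g hg
    set a : Fin m → ℝ := fun l => ζ l g with ha
    set x : X := c⁻¹ • g + ∑ l, (-(c⁻¹ * c⁻¹ * a l)) • t l with hx
    have hgV : g ∈ V := hLV (hKL hg)
    have hζx : ∀ s, ζ s x = c⁻¹ * a s := by
      intro s
      rw [hx, map_add, map_smul, map_sum]
      have h1 : ∀ l, ζ s ((-(c⁻¹ * c⁻¹ * a l)) • t l) = 0 := by
        intro l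
        rw [map_smul, hζt s l, smul_eq_mul, mul_zero]
      rw [Finset.sum_congr rfl fun l _ => h1 l]
      simp [smul_eq_mul, ha]
    have hηx : ∀ j, η j x = 0 := by
      intro j
      rw [hx, map_add, map_smul, map_sum]
      have h1 : ∀ l, η j ((-(c⁻¹ * c⁻¹ * a l)) • t l) = 0 := by
        intro l
        rw [map_smul, hηV j _ (htV l), smul_eq_mul, mul_zero]
      rw [Finset.sum_congr rfl fun l _ => h1 l]
      simp [hηV j g hgV, smul_eq_mul]
    have hDx : D x = g := by
      rw [hDapp]
      have hs1 : ∑ l, ζ l x • t l = ∑ l, (c⁻¹ * a l) • t l :=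
        Finset.sum_congr rfl fun l _ => by rw [hζx l]
      have hs2 : ∑ j, η j x • t' j = ∑ j : Fin e, (0:ℝ) • t' j :=
        Finset.sum_congr rfl fun j _ => by rw [hηx j]
      rw [hs1, hs2]
      simp only [zero_smul, Finset.sum_const_zero, add_zero]
      have h1 : c • x = g + ∑ l, (-(c⁻¹ * a l)) • t l := by
        rw [hx, smul_add, smul_smul, mul_inv_cancel₀ hcne, one_smul, Finset.smul_sum]
        congr 1
        refine Finset.sum_congr rfl fun l _ => ?_
        rw [smul_smul]
        congr 1
        field_simp
      rw [h1, add_assoc]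
      have h2 : ∑ l, (-(c⁻¹ * a l)) • t l + ∑ l, (c⁻¹ * a l) • t l = 0 := by
        rw [← Finset.sum_add_distrib]
        simp [neg_smul]
      rw [h2, add_zero]
    have hrept : ∀ l, KRep K (t l) (c * Cl l) := by
      intro l
      rw [ht]
      have k1 : KRep K (ww l) (rw' l) := hrwrep l
      have k2 : KRep K ((-c) • vv l) (|(-c)| * rv l) := (hrvrep l).smul (-c)
      have k3 : KRep K (∑ i, (c * ζ i (vv l) - ζ i (ww l)) • u i)
          (∑ i, |c * ζ i (vv l) - ζ i (ww l)| * ru i) :=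
        KRep.sum _ _ _ (fun i _ => (hrurep i).smul _)
      refine ((k1.add k2).add k3).mono ?_
      rw [abs_neg, abs_of_pos hc0]
      have hterm : ∀ i, |c * ζ i (vv l) - ζ i (ww l)| * ru i
          ≤ c * ((|ζ i (vv l)| + |ζ i (ww l)|) * ru i) := by
        intro i
        have habs : |c * ζ i (vv l) - ζ i (ww l)| ≤ c * (|ζ i (vv l)| + |ζ i (ww l)|) := by
          calc |c * ζ i (vv l) - ζ i (ww l)| ≤ |c * ζ i (vv l)| + |ζ i (ww l)| :=
                abs_sub _ _
          _ = c * |ζ i (vv l)| + |ζ i (ww l)| := by rw [abs_mul, abs_of_pos hc0]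
          _ ≤ c * |ζ i (vv l)| + c * |ζ i (ww l)| := by
              nlinarith [abs_nonneg (ζ i (ww l)), hc1]
          _ = c * (|ζ i (vv l)| + |ζ i (ww l)|) := by ring
        exact le_trans (mul_le_mul_of_nonneg_right habs (hru0 i)) (le_of_eq (mul_assoc _ _ _))
      have h3 : ∑ i, |c * ζ i (vv l) - ζ i (ww l)| * ru i
          ≤ c * ∑ i, (|ζ i (vv l)| + |ζ i (ww l)|) * ru i := by
        rw [Finset.mul_sum]
        exact Finset.sum_le_sum fun i _ => hterm i
      have h4 : rw' l ≤ c * rw' l := by nlinarith [hrw0 l, hc1]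
      have h5 : Cl l = rw' l + rv l + ∑ i, (|ζ i (vv l)| + |ζ i (ww l)|) * ru i := rfl
      rw [h5]
      nlinarith [h3, h4, hrv0 l, hrw0 l]
    have hrepx : KRep K x
        (c⁻¹ * 1 + ∑ l, |(-(c⁻¹ * c⁻¹ * a l))| * (c * Cl l)) := by
      rw [hx]
      have k1 : KRep K (c⁻¹ • g) (|c⁻¹| * 1) := (KRep.of_mem hg).smul c⁻¹
      have k1' : KRep K (c⁻¹ • g) (c⁻¹ * 1) := by
        have : |c⁻¹| = c⁻¹ := abs_of_pos (inv_pos.2 hc0)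
        rwa [this] at k1
      exact k1'.add (KRep.sum _ _ _ fun l _ => (hrept l).smul _)
    have hbound : c⁻¹ * 1 + ∑ l, |(-(c⁻¹ * c⁻¹ * a l))| * (c * Cl l) ≤ 1 := by
      have h1 : ∀ l, |(-(c⁻¹ * c⁻¹ * a l))| * (c * Cl l) ≤ c⁻¹ * (sζ l * Cl l) := by
        intro l
        rw [abs_neg, abs_mul, abs_mul, abs_of_pos (inv_pos.2 hc0)]
        have hal : |a l| ≤ sζ l := hsζ l g hg
        have e : c⁻¹ * c⁻¹ * |a l| * (c * Cl l) = c⁻¹ * (|a l| * Cl l) := by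
          field_simp
        rw [e]
        have : |a l| * Cl l ≤ sζ l * Cl l :=
          mul_le_mul_of_nonneg_right hal (hCl0 l)
        exact mul_le_mul_of_nonneg_left this (le_of_lt (inv_pos.2 hc0))
      have h2 : ∑ l, |(-(c⁻¹ * c⁻¹ * a l))| * (c * Cl l) ≤ c⁻¹ * SB := by
        rw [hSB, Finset.mul_sum]
        exact Finset.sum_le_sum fun l _ => h1 l
      have h3 : c⁻¹ * 1 + c⁻¹ * SB = c⁻¹ * c := by
        rw [hc]
        ring
      have h4 : c⁻¹ * c = 1 := inv_mul_cancel₀ hcne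
      linarith
    have hxK : x ∈ K := KRep.mem_of_rep_one hconv hbal h0K (hrepx.mono hbound)
    exact ⟨x, hxK, hDx⟩
  · intro y f hf
    set co := BY.repr y with hco
    have hydecY : (∑ l, co (Sum.inl l) • BY (Sum.inl l))
        + (∑ j, co (Sum.inr j) • BY (Sum.inr j)) = y := by
      rw [← Fintype.sum_sum_type (f := fun s => co s • BY s)]
      exact BY.sum_repr y
    have hydec : (y : X) = ∑ l, co (Sum.inl l) • ys l + ∑ j, co (Sum.inr j) • zs j := by
      have h := congrArg (fun w : Y => (w : X)) hydecY
      simp only [Submodule.coe_add, AddSubmonoidClass.coe_finset_sum, SetLike.val_smul] at h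
      exact h.symm
    have hNdec : N y = ∑ l, co (Sum.inl l) • ww l
        + ∑ j, co (Sum.inr j) • N (BY (Sum.inr j)) := by
      conv_lhs => rw [← hydecY]
      rw [map_add, map_sum, map_sum]
      congr 1
      · exact Finset.sum_congr rfl fun l _ => by rw [map_smul, hww]
      · exact Finset.sum_congr rfl fun j _ => by rw [map_smul]
    have hζyco : ∀ s, ζ s (y : X) = co (Sum.inl s) := by
      intro s
      rw [hydec, map_add, map_sum, map_sum]
      have h1 : ∀ l, ζ s (co (Sum.inl l) • ys l) = if s = l then co (Sum.inl l) else 0 := by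
        intro l
        rw [map_smul, hζy s l, smul_eq_mul]
        by_cases h : s = l <;> simp [h]
      have h2 : ∀ j, ζ s (co (Sum.inr j) • zs j) = 0 := by
        intro j
        rw [map_smul, hζz s j, smul_eq_mul, mul_zero]
      rw [Finset.sum_congr rfl fun l _ => h1 l, Finset.sum_congr rfl fun j _ => h2 j,
        Finset.sum_ite_eq]
      simp
    have hηyco : ∀ j, η j (y : X) = co (Sum.inr j) := by
      intro j
      rw [hydec, map_add, map_sum, map_sum]
      have h1 : ∀ l, η j (co (Sum.inl l) • ys l) = 0 := by
        intro l
        rw [map_smul, hηV j _ (hysV l), smul_eq_mul, mul_zero]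
      have h2 : ∀ j', η j (co (Sum.inr j') • zs j') = if j = j' then co (Sum.inr j') else 0 := by
        intro j'
        rw [map_smul, hηz j j', smul_eq_mul]
        by_cases h : j = j' <;> simp [h]
      rw [Finset.sum_congr rfl fun l _ => h1 l, Finset.sum_congr rfl fun j' _ => h2 j',
        Finset.sum_ite_eq]
      simp
    -- now the computation
    rw [map_sub, hDapp, map_add, map_add, map_smul, map_sum, map_sum, smul_eq_mul]
    have hfy : f (y : X) = (∑ l, co (Sum.inl l) * f (ys l))
        + (∑ j, co (Sum.inr j) * f (zs j)) := by
      conv_lhs => rw [hydec]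
      rw [map_add, map_sum, map_sum]
      congr 1
      · exact Finset.sum_congr rfl fun l _ => by rw [map_smul, smul_eq_mul]
      · exact Finset.sum_congr rfl fun j _ => by rw [map_smul, smul_eq_mul]
    have hfNy : f (N y) = (∑ l, co (Sum.inl l) * f (ww l))
        + (∑ j, co (Sum.inr j) * f (N (BY (Sum.inr j)))) := by
      conv_lhs => rw [hNdec]
      rw [map_add, map_sum, map_sum]
      congr 1
      · exact Finset.sum_congr rfl fun l _ => by rw [map_smul, smul_eq_mul]
      · exact Finset.sum_congr rfl fun j _ => by rw [map_smul, smul_eq_mul]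
    have e1 : ∑ l, f (ζ l (y : X) • t l) = (∑ l, co (Sum.inl l) * f (ww l))
        - c * (∑ l, co (Sum.inl l) * f (ys l)) := by
      have h : ∀ l, f (ζ l (y : X) • t l)
          = co (Sum.inl l) * f (ww l) - c * (co (Sum.inl l) * f (ys l)) := by
        intro l
        rw [map_smul, smul_eq_mul, hζyco l, hft f hf l]
        ring
      rw [Finset.sum_congr rfl fun l _ => h l, Finset.sum_sub_distrib, ← Finset.mul_sum]
    have e2 : ∑ j, f (η j (y : X) • t' j)
        = (∑ j, co (Sum.inr j) * f (N (BY (Sum.inr j))))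
          - c * (∑ j, co (Sum.inr j) * f (zs j)) := by
      have h : ∀ j, f (η j (y : X) • t' j)
          = co (Sum.inr j) * f (N (BY (Sum.inr j))) - c * (co (Sum.inr j) * f (zs j)) := by
        intro j
        rw [map_smul, smul_eq_mul, hηyco j, hft' f j]
        ring
      rw [Finset.sum_congr rfl fun j _ => h j, Finset.sum_sub_distrib, ← Finset.mul_sum]
    rw [e1, e2, hfy, hfNy]
    ring
end

section
/- Let H be an infinite-dimensional separable Hilbert space and let A ∈ L(H) be a non-compact bounded linear operator. Then for every bounded linear operator B on H, the set S(A, B) = {(X, Y) ∈ L(H) × L(H) : X ∘ A ∘ Y = B} of all solutions of the equation XAY = B is dense in L(H) × L(H) with respect to the product of the strong operator topologies. -/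
open Filter Topology Metric

open Metric Submodule Finset

theorem auxA {H : Type*} [NormedAddCommGroup H] [InnerProductSpace ℝ H] [CompleteSpace H]
    (A : H →L[ℝ] H) (hA : ¬ IsCompactOperator A) :
    ∃ δ : ℝ, 0 < δ ∧ ∀ G : Submodule ℝ H, FiniteDimensional ℝ G →
      ∃ x : H, ‖x‖ = 1 ∧ x ∈ Gᗮ ∧ δ ≤ ‖A x‖ := by
  by_contra hcon
  push_neg at hcon
  apply hA
  have htb : TotallyBounded (⇑A '' closedBall 0 1) := by
    rw [Metric.totallyBounded_iff]
    intro ε hε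
    obtain ⟨G, hG, hsmall⟩ := hcon (ε/3) (by linarith)
    haveI := hG
    have key : ∀ v : H, v ∈ Gᗮ → ‖A v‖ ≤ ε/3 * ‖v‖ := by
      intro v hv
      rcases eq_or_ne v 0 with rfl | hv0
      · simp
      · have h1 : ‖(‖v‖⁻¹ • v)‖ = 1 := by
          rw [norm_smul, norm_inv, norm_norm, inv_mul_cancel₀ (norm_ne_zero_iff.2 hv0)]
        have h2 := hsmall _ h1 (Gᗮ.smul_mem _ hv)
        rw [map_smul, norm_smul, norm_inv, norm_norm] at h2
        have h3 : 0 < ‖v‖ := norm_pos_iff.2 hv0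
        rw [inv_mul_lt_iff₀ h3] at h2
        nlinarith
    have hC : IsCompact ((A.comp G.subtypeL) '' closedBall 0 1) :=
      (isCompact_closedBall (0 : G) 1).image (A.comp G.subtypeL).continuous
    obtain ⟨t, ht, hcov⟩ := Metric.totallyBounded_iff.1 hC.totallyBounded (ε/3) (by linarith)
    refine ⟨t, ht, ?_⟩
    rintro _ ⟨x, hx, rfl⟩
    have hx1 : ‖x‖ ≤ 1 := by simpa [dist_eq_norm] using hx
    set g : G := orthogonalProjection G x with hg
    have hgn : ‖g‖ ≤ 1 := by
      calc ‖g‖ ≤ ‖orthogonalProjection G‖ * ‖x‖ := (orthogonalProjection G).le_opNorm x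
      _ ≤ 1 * 1 := by
          apply mul_le_mul (orthogonalProjection_norm_le G) hx1 (norm_nonneg _) zero_le_one
      _ = 1 := one_mul 1
    have hmem : A.comp G.subtypeL g ∈ (A.comp G.subtypeL) '' closedBall 0 1 :=
      ⟨g, by simpa [dist_eq_norm] using hgn, rfl⟩
    obtain ⟨y, hy, hby⟩ := Set.mem_iUnion₂.1 (hcov hmem)
    refine Set.mem_iUnion₂.2 ⟨y, hy, ?_⟩
    have hsub : ‖A x - A (g : H)‖ ≤ ε/3 * 2 := by
      have h4 : x - (g : H) ∈ Gᗮ := Submodule.sub_starProjection_mem_orthogonal (K := G) x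
      have h5 := key _ h4
      have h6 : ‖x - (g : H)‖ ≤ 2 := by
        have h7 := norm_sub_le x (g : H)
        have h8 : ‖(g : H)‖ = ‖g‖ := rfl
        linarith
      calc ‖A x - A (g : H)‖ = ‖A (x - (g : H))‖ := by rw [map_sub]
      _ ≤ ε/3 * ‖x - (g:H)‖ := h5
      _ ≤ ε/3 * 2 := by nlinarith
    have hdist : dist (A (g : H)) y < ε/3 := by simpa [dist_eq_norm] using hby
    have : dist (A x) y < ε := by
      calc dist (A x) y ≤ dist (A x) (A (g:H)) + dist (A (g:H)) y := dist_triangle _ _ _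
      _ < ε/3*2 + ε/3 := by
          rw [dist_eq_norm]
          exact add_lt_add_of_le_of_lt hsub hdist
      _ = ε := by ring
    simpa using this
  refine ⟨closure (⇑A '' closedBall 0 1), ?_, ?_⟩
  · exact TotallyBounded.isCompact_of_isClosed htb.closure isClosed_closure
  · refine Filter.mem_of_superset (closedBall_mem_nhds (0:H) one_pos) ?_
    intro x hx
    exact subset_closure (Set.mem_image_of_mem _ hx)
local notation "⟪" x ", " y "⟫" => @inner ℝ _ _ x y

theorem auxB {H : Type*} [NormedAddCommGroup H] [InnerProductSpace ℝ H] [CompleteSpace H]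
    (A : H →L[ℝ] H) (hA : ¬ IsCompactOperator A) (F : Submodule ℝ H)
    (hFd : FiniteDimensional ℝ F) :
    ∃ (δ : ℝ) (e : ℕ → H), 0 < δ ∧ Orthonormal ℝ e ∧ (∀ n, δ ≤ ‖A (e n)‖) ∧
      (∀ i j, i ≠ j → ⟪A (e i), A (e j)⟫ = 0) ∧
      (∀ n, ∀ f ∈ F, ⟪A (e n), f⟫ = 0) := by
  classical
  obtain ⟨δ, hδ, hstep⟩ :
      ∃ δ : ℝ, 0 < δ ∧ ∀ G : Submodule ℝ H, FiniteDimensional ℝ G →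
        ∃ x : H, ‖x‖ = 1 ∧ x ∈ Gᗮ ∧ δ ≤ ‖A x‖ := auxA A hA
  have hex : ∀ s : Finset H, ∃ x : H, ‖x‖ = 1 ∧ x ∈ (span ℝ (s : Set H))ᗮ ∧ δ ≤ ‖A x‖ :=
    fun s => hstep _ (FiniteDimensional.span_of_finite ℝ s.finite_toSet)
  choose step h1 h2 h3 using hex
  obtain ⟨t, ht⟩ : F.FG := (Submodule.fg_iff_finiteDimensional _).2 hFd
  set Aadj := ContinuousLinearMap.adjoint A with hAadj
  set sFun : ℕ → Finset H :=
    fun n => Nat.rec (t ∪ t.image Aadj)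
      (fun _ s => insert (step s) (insert (Aadj (A (step s))) s)) n with hsFun
  set e : ℕ → H := fun n => step (sFun n) with he
  have hsucc : ∀ n, sFun (n+1) = insert (e n) (insert (Aadj (A (e n))) (sFun n)) := fun n => rfl
  have hmono : Monotone sFun := by
    apply monotone_nat_of_le_succ
    intro n
    rw [hsucc]
    exact (Finset.subset_insert _ _).trans (Finset.subset_insert _ _)
  -- e n is orthogonal to everything in span (sFun n)
  have horth : ∀ n, ∀ u ∈ span ℝ ((sFun n : Set H)), ⟪u, e n⟫ = 0 := by
    intro n u hu
    exact (Submodule.mem_orthogonal _ _).1 (h2 (sFun n)) u hu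
  have hei_mem : ∀ {i n}, i < n → e i ∈ (sFun n : Set H) := by
    intro i n hin
    have : e i ∈ sFun (i+1) := by rw [hsucc]; exact Finset.mem_insert_self _ _
    exact hmono hin this
  have hadj_mem : ∀ {i n}, i < n → Aadj (A (e i)) ∈ (sFun n : Set H) := by
    intro i n hin
    have : Aadj (A (e i)) ∈ sFun (i+1) := by
      rw [hsucc]; exact Finset.mem_insert_of_mem (Finset.mem_insert_self _ _)
    exact hmono hin this
  have key2 : ∀ i j, i < j → ⟪A (e i), A (e j)⟫ = 0 := by
    intro i j hij
    have : ⟪Aadj (A (e i)), e j⟫ = 0 :=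
      horth j _ (subset_span (hadj_mem hij))
    rwa [hAadj, ContinuousLinearMap.adjoint_inner_left] at this
  refine ⟨δ, e, hδ, ?_, fun n => h3 _, ?_, ?_⟩
  · rw [orthonormal_iff_ite]
    intro i j
    rcases lt_trichotomy i j with h | rfl | h
    · rw [if_neg h.ne]
      exact horth j _ (subset_span (hei_mem h))
    · rw [if_pos rfl, real_inner_self_eq_norm_sq, h1, one_pow]
    · rw [if_neg h.ne', real_inner_comm]
      exact horth i _ (subset_span (hei_mem h))
  · intro i j hij
    rcases lt_or_gt_of_ne hij with h | h
    · exact key2 i j h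
    · rw [real_inner_comm]; exact key2 j i h
  · intro n f hf
    have hf' : f ∈ span ℝ (t : Set H) := by rw [ht]; exact hf
    have : Aadj f ∈ span ℝ ((sFun n : Set H)) := by
      have h4 : Aadj f ∈ Submodule.map (Aadj : H →ₗ[ℝ] H) (span ℝ (t : Set H)) :=
        Submodule.mem_map_of_mem hf'
      rw [Submodule.map_span] at h4
      refine span_mono ?_ h4
      intro z hz
      obtain ⟨u, hu, rfl⟩ := hz
      have : (Aadj : H →ₗ[ℝ] H) u ∈ t.image Aadj := Finset.mem_image_of_mem _ hu
      have h5 : (t ∪ t.image Aadj : Finset H) ⊆ sFun n := hmono (Nat.zero_le n)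
      exact h5 (Finset.mem_union_right _ this)
    have h6 : ⟪Aadj f, e n⟫ = 0 := horth n _ this
    rw [hAadj, ContinuousLinearMap.adjoint_inner_left] at h6
    rw [real_inner_comm]
    exact h6

lemma auxPyth {H : Type*} [NormedAddCommGroup H] [InnerProductSpace ℝ H]
    (g : ℕ → H) (horth : ∀ i j, i ≠ j → ⟪g i, g j⟫ = 0) (s : Finset ℕ) (c : ℕ → ℝ) :
    ‖∑ i ∈ s, c i • g i‖^2 = ∑ i ∈ s, (c i)^2 * ‖g i‖^2 := by
  rw [← real_inner_self_eq_norm_sq, sum_inner]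
  refine Finset.sum_congr rfl ?_
  intro i hi
  rw [inner_sum, Finset.sum_eq_single i]
  · rw [real_inner_smul_left, real_inner_smul_right, real_inner_self_eq_norm_sq]; ring
  · intro j _ hji
    rw [real_inner_smul_left, real_inner_smul_right, horth i j (Ne.symm hji)]; ring
  · intro h; exact absurd hi h

theorem auxV {H : Type*} [NormedAddCommGroup H] [InnerProductSpace ℝ H] [CompleteSpace H]
    [TopologicalSpace.SeparableSpace H] (hH : ¬ FiniteDimensional ℝ H)
    (A : H →L[ℝ] H) (hA : ¬ IsCompactOperator A) (F : Submodule ℝ H)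
    (hFd : FiniteDimensional ℝ F) :
    ∃ (V : H →L[ℝ] H) (c : ℝ), 0 < c ∧ (∀ h : H, ‖V h‖ = ‖h‖) ∧
      (∀ h : H, c * ‖h‖ ≤ ‖A (V h)‖) ∧ (∀ h : H, ∀ f ∈ F, ⟪A (V h), f⟫ = 0) := by
  classical
  obtain ⟨δ, e, hδ, hon, hlow, horthAe, hFe⟩ := auxB A hA F hFd
  set W : Submodule ℝ H := (span ℝ (Set.range e)).topologicalClosure with hW
  haveI : CompleteSpace W := (Submodule.isClosed_topologicalClosure _).completeSpace_coe
  -- the two key properties hold on all of W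
  have hWprop : ∀ v : H, v ∈ W → (δ * ‖v‖ ≤ ‖A v‖ ∧ ∀ f ∈ F, ⟪A v, f⟫ = 0) := by
    have hsub2 : ∀ v : H, v ∈ span ℝ (Set.range e) → ∀ f ∈ F, ⟪A v, f⟫ = 0 := by
      intro v hv f hf
      induction hv using Submodule.span_induction with
      | mem x hx =>
          obtain ⟨n, rfl⟩ := hx
          exact hFe n f hf
      | zero => simp
      | add x y _ _ hx hy => rw [map_add, inner_add_left, hx, hy]; ring
      | smul a x _ hx => rw [map_smul, real_inner_smul_left, hx]; ring
    have hsub : ∀ v : H, v ∈ span ℝ (Set.range e) →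
        (δ * ‖v‖ ≤ ‖A v‖ ∧ ∀ f ∈ F, ⟪A v, f⟫ = 0) := by
      intro v hv
      refine ⟨?_, hsub2 v hv⟩
      obtain ⟨c, rfl⟩ := Finsupp.mem_span_range_iff_exists_finsupp.1 hv
      have hxe : (c.sum fun i a => a • e i) = ∑ i ∈ c.support, c i • e i := rfl
      · have hers : ∀ i j : ℕ, i ≠ j → ⟪e i, e j⟫ = 0 := fun i j hij => hon.2 hij
        have h1 : ‖(c.sum fun i a => a • e i)‖^2 = ∑ i ∈ c.support, (c i)^2 := by
          rw [hxe, auxPyth e hers]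
          refine Finset.sum_congr rfl fun i _ => ?_
          rw [hon.1 i]; ring
        have h2 : ‖A (c.sum fun i a => a • e i)‖^2 = ∑ i ∈ c.support, (c i)^2 * ‖A (e i)‖^2 := by
          rw [hxe, map_sum]
          have : ∀ i ∈ c.support, A (c i • e i) = c i • A (e i) := fun i _ => map_smul A _ _
          rw [Finset.sum_congr rfl this, auxPyth (fun n => A (e n)) horthAe]
        have h3 : (δ * ‖(c.sum fun i a => a • e i)‖)^2 ≤ ‖A (c.sum fun i a => a • e i)‖^2 := by
          rw [h2, mul_pow, h1, Finset.mul_sum]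
          refine Finset.sum_le_sum fun i _ => ?_
          have h4 : δ^2 ≤ ‖A (e i)‖^2 := by
            have := hlow i
            nlinarith [norm_nonneg (A (e i))]
          nlinarith [sq_nonneg (c i)]
        have h5 : 0 ≤ δ * ‖(c.sum fun i a => a • e i)‖ :=
          mul_nonneg hδ.le (norm_nonneg _)
        nlinarith [norm_nonneg (A (c.sum fun i a => a • e i))]
    intro v hv
    have hclosed1 : IsClosed {v : H | δ * ‖v‖ ≤ ‖A v‖} :=
      isClosed_le (continuous_const.mul continuous_norm) A.continuous.norm
    have hclosed2 : ∀ f : H, IsClosed {v : H | ⟪A v, f⟫ = 0} := fun f =>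
      isClosed_eq ((A.continuous).inner continuous_const) continuous_const
    have hvW : v ∈ closure ((span ℝ (Set.range e)) : Set H) := by
      rwa [← Submodule.topologicalClosure_coe]
    constructor
    · exact closure_minimal (fun u hu => (hsub u hu).1) hclosed1 hvW
    · intro f hf
      exact closure_minimal (fun u hu => (hsub u hu).2 f hf) (hclosed2 f) hvW
  -- membership of the e n in W
  have heW : ∀ n, e n ∈ W := fun n =>
    (Submodule.le_topologicalClosure _) (subset_span (Set.mem_range_self n))
  obtain ⟨w, b, hb⟩ := exists_hilbertBasis ℝ H
  have honw : Orthonormal ℝ ((↑) : w → H) := hb ▸ b.orthonormal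
  haveI hcount : Countable w := by
    have hd : Pairwise (Function.onFun Disjoint fun i : w => ball (i : H) 2⁻¹) := by
      intro i j hij
      have hinner : ⟪(i : H), (j : H)⟫ = 0 := honw.2 hij
      have hdist : (1 : ℝ) ≤ dist (i : H) (j : H) := by
        rw [dist_eq_norm]
        have h2 : ‖(i : H) - (j : H)‖^2 = 2 := by
          rw [norm_sub_sq_real, honw.1 i, honw.1 j, hinner]; norm_num
        nlinarith [norm_nonneg ((i : H) - (j : H))]
      have : (2⁻¹ : ℝ) + 2⁻¹ ≤ dist (i : H) (j : H) := by linarith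
      exact Metric.ball_disjoint_ball this
    exact hd.countable_of_isOpen_disjoint (fun i => isOpen_ball)
      (fun i => ⟨(i : H), mem_ball_self (by norm_num)⟩)
  haveI hinf : Infinite w := by
    rw [← not_finite_iff_infinite]
    intro hfin
    apply hH
    have hfin' : (w : Set H).Finite := Set.toFinite _
    have hfd : FiniteDimensional ℝ (span ℝ (w : Set H)) :=
      FiniteDimensional.span_of_finite ℝ hfin'
    have hcl : IsClosed ((span ℝ (w : Set H) : Submodule ℝ H) : Set H) :=
      Submodule.closed_of_finiteDimensional _
    have hds := b.dense_span
    rw [hb, Subtype.range_coe] at hds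
    rw [hcl.submodule_topologicalClosure_eq] at hds
    have htop : FiniteDimensional ℝ (⊤ : Submodule ℝ H) := hds ▸ hfd
    exact Submodule.topEquiv.finiteDimensional
  obtain ⟨dd⟩ := nonempty_denumerable w
  let q : w ≃ ℕ := @Denumerable.eqv w dd
  let e'' : w → W := fun i => ⟨e (q i), heW _⟩
  have hone'' : Orthonormal ℝ e'' := by
    constructor
    · intro i
      have : ‖e'' i‖ = ‖e (q i)‖ := rfl
      rw [this]; exact hon.1 _
    · intro i j hij
      exact hon.2 (q.injective.ne hij)
  have hspan'' : ⊤ ≤ (span ℝ (Set.range e'')).topologicalClosure := by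
    intro x _
    have hx : (x : H) ∈ closure ((span ℝ (Set.range e)) : Set H) := by
      rw [← Submodule.topologicalClosure_coe]; exact x.2
    rw [← SetLike.mem_coe, Submodule.topologicalClosure_coe, Metric.mem_closure_iff]
    intro ε hε
    rw [Metric.mem_closure_iff] at hx
    obtain ⟨v, hv, hdist⟩ := hx ε hε
    have hvW : v ∈ W := Submodule.le_topologicalClosure _ hv
    have hrange : (W.subtype : W → H) '' Set.range e'' = Set.range e := by
      ext z
      constructor
      · rintro ⟨u, ⟨i, rfl⟩, rfl⟩
        exact ⟨q i, rfl⟩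
      · rintro ⟨n, rfl⟩
        exact ⟨e'' (q.symm n), ⟨q.symm n, rfl⟩, by simp [e'']⟩
    have hvmap : v ∈ Submodule.map W.subtype (span ℝ (Set.range e'')) := by
      rw [Submodule.map_span, hrange]
      exact hv
    obtain ⟨u, hu, huv⟩ := hvmap
    have hueq : u = ⟨v, hvW⟩ := Subtype.ext huv
    refine ⟨⟨v, hvW⟩, by rwa [← hueq], ?_⟩
    exact hdist
  let bW : HilbertBasis w ℝ W := HilbertBasis.mk hone'' hspan''
  let iso : H ≃ₗᵢ[ℝ] W := b.repr.trans bW.repr.symm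
  let V : H →L[ℝ] H :=
    W.subtypeL.comp (iso.toContinuousLinearEquiv : H →L[ℝ] W)
  have hVapp : ∀ h : H, V h = ((iso h : W) : H) := by
    intro h
    simp [V, iso.coe_toContinuousLinearEquiv]
  have hVmem : ∀ h : H, V h ∈ W := by
    intro h; rw [hVapp]; exact (iso h).2
  have hVnorm : ∀ h : H, ‖V h‖ = ‖h‖ := by
    intro h
    rw [hVapp]
    have : ‖((iso h : W) : H)‖ = ‖iso h‖ := rfl
    rw [this, iso.norm_map]
  refine ⟨V, δ, hδ, hVnorm, ?_, ?_⟩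
  · intro h
    have := (hWprop (V h) (hVmem h)).1
    rwa [hVnorm] at this
  · intro h f hf
    exact (hWprop (V h) (hVmem h)).2 f hf

set_option maxHeartbeats 1000000 in
/-- If `A` is a non-compact bounded operator on an infinite-dimensional separable Hilbert
space, then for every `B` the solution set of `X A Y = B` is dense in `L(H) × L(H)` for the
product of the strong operator topologies (expressed via the embedding into
`(H → H) × (H → H)` with the product/pointwise topology). -/
theorem solutions_XAY_eq_B_SOT_dense_of_not_compact
    {H : Type*} [NormedAddCommGroup H] [InnerProductSpace ℝ H] [CompleteSpace H]
    [TopologicalSpace.SeparableSpace H] (hH : ¬ FiniteDimensional ℝ H)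
    (A : H →L[ℝ] H) (hA : ¬ IsCompactOperator A)
    (B : H →L[ℝ] H) (X Y : H →L[ℝ] H) :
    ((⇑X, ⇑Y) : (H → H) × (H → H)) ∈
      closure {p : (H → H) × (H → H) |
        ∃ X' Y' : H →L[ℝ] H, X'.comp (A.comp Y') = B ∧ p = (⇑X', ⇑Y')} := by
  classical
  rw [_root_.mem_closure_iff]
  intro o ho hmemo
  obtain ⟨u1, u2, hu1, hu2, hXu, hYu, hsub⟩ := isOpen_prod_iff.1 ho _ _ hmemo
  obtain ⟨I, uI, hI, hIsub⟩ := isOpen_pi_iff.1 hu1 _ hXu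
  obtain ⟨J, uJ, hJ, hJsub⟩ := isOpen_pi_iff.1 hu2 _ hYu
  set M : Submodule ℝ H := span ℝ (J : Set H) with hM
  haveI : FiniteDimensional ℝ M := FiniteDimensional.span_of_finite ℝ J.finite_toSet
  set F : Submodule ℝ H := span ℝ ((fun y => A (Y y)) '' (J : Set H) ∪ (I : Set H)) with hF
  haveI hFfd : FiniteDimensional ℝ F := FiniteDimensional.span_of_finite ℝ
    ((J.finite_toSet.image _).union I.finite_toSet)
  obtain ⟨V, c, hc, hVnorm, hVlow, hVorth⟩ := auxV hH A hA F hFfd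
  -- radii for the Y-side neighborhoods
  have hball : ∀ y : H, ∃ r : ℝ, 0 < r ∧ (y ∈ J → ball (Y y) r ⊆ uJ y) := by
    intro y
    by_cases hy : y ∈ J
    · obtain ⟨r, hr, hrsub⟩ := Metric.isOpen_iff.1 (hJ y hy).1 _ (hJ y hy).2
      exact ⟨r, hr, fun _ => hrsub⟩
    · exact ⟨1, one_pos, fun h => absurd h hy⟩
  choose rad hrad hradsub using hball
  obtain ⟨η, hη, hηlt⟩ : ∃ η : ℝ, 0 < η ∧ ∀ y ∈ J, η * ‖y‖ < rad y := by
    rcases J.eq_empty_or_nonempty with hJe | hJne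
    · exact ⟨1, one_pos, by simp [hJe]⟩
    · refine ⟨J.inf' hJne (fun y => rad y / (‖y‖ + 1)), ?_, ?_⟩
      · rw [Finset.lt_inf'_iff]
        intro y _
        have : (0:ℝ) < ‖y‖ + 1 := by positivity
        exact div_pos (hrad y) this
      · intro y hy
        have h1 : J.inf' hJne (fun y => rad y / (‖y‖ + 1)) ≤ rad y / (‖y‖+1) :=
          Finset.inf'_le _ hy
        have h2 : (0:ℝ) < ‖y‖ + 1 := by positivity
        have h0 : 0 < J.inf' hJne (fun y => rad y / (‖y‖ + 1)) := by
          rw [Finset.lt_inf'_iff]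
          intro z _
          have : (0:ℝ) < ‖z‖ + 1 := by positivity
          exact div_pos (hrad z) this
        calc J.inf' hJne (fun y => rad y / (‖y‖ + 1)) * ‖y‖
            < J.inf' hJne (fun y => rad y / (‖y‖ + 1)) * (‖y‖ + 1) := by
              exact mul_lt_mul_of_pos_left (lt_add_one _) h0
          _ ≤ (rad y / (‖y‖+1)) * (‖y‖ + 1) := by
              exact mul_le_mul_of_nonneg_right h1 (by positivity)
          _ = rad y := div_mul_cancel₀ _ (ne_of_gt h2)
  haveI : CompleteSpace M := FiniteDimensional.complete ℝ M
  set Pm : H →L[ℝ] H := M.subtypeL.comp (orthogonalProjection M) with hPm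
  set Y' : H →L[ℝ] H := Y.comp Pm + η • V with hY'
  set L : H →L[ℝ] H := A.comp Y' with hL
  have hLapp : ∀ h : H, L h = A (Y (Pm h)) + η • A (V h) := by
    intro h
    simp [hL, hY', map_add, map_smul]
  -- A (Y (Pm h)) lies in F
  have hmapF : ∀ v ∈ M, A (Y v) ∈ F := by
    intro v hv
    induction hv using Submodule.span_induction with
    | mem x hx => exact subset_span (Or.inl ⟨x, hx, rfl⟩)
    | zero => simpa using F.zero_mem
    | add x y _ _ hx hy => rw [map_add, map_add]; exact F.add_mem hx hy
    | smul a x _ hx => rw [map_smul, map_smul]; exact F.smul_mem a hx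
  have hPmMem : ∀ h : H, Pm h ∈ M := fun h => (orthogonalProjection M h).2
  have hinner0 : ∀ h h' : H, ⟪A (Y (Pm h)), η • A (V h')⟫ = 0 := by
    intro h h'
    rw [real_inner_smul_right, real_inner_comm, hVorth h' _ (hmapF _ (hPmMem h))]
    ring
  have hLlow : ∀ h : H, (η * c) * ‖h‖ ≤ ‖L h‖ := by
    intro h
    have hpyth : ‖L h‖^2 = ‖A (Y (Pm h))‖^2 + ‖η • A (V h)‖^2 := by
      rw [hLapp h, norm_add_sq_real, hinner0 h h]; ring
    have h1 : ‖η • A (V h)‖ = η * ‖A (V h)‖ := by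
      rw [norm_smul, Real.norm_eq_abs, abs_of_pos hη]
    have h2 : η * (c * ‖h‖) ≤ η * ‖A (V h)‖ :=
      mul_le_mul_of_nonneg_left (hVlow h) hη.le
    have h3 : ((η * c) * ‖h‖)^2 ≤ ‖L h‖^2 := by
      rw [hpyth, h1]
      nlinarith [sq_nonneg (‖A (Y (Pm h))‖), mul_nonneg (mul_nonneg hη.le hc.le) (norm_nonneg h),
        mul_nonneg hη.le (mul_nonneg hc.le (norm_nonneg h))]
    nlinarith [norm_nonneg (L h), mul_nonneg (mul_nonneg hη.le hc.le) (norm_nonneg h)]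
  have hηc : 0 < η * c := mul_pos hη hc
  have hLinj : Function.Injective ⇑L := by
    intro a b hab
    have h1 := hLlow (a - b)
    rw [map_sub, hab, sub_self, norm_zero] at h1
    have : ‖a - b‖ ≤ 0 := by nlinarith
    rw [← sub_eq_zero]
    exact norm_le_zero_iff.1 this
  set K : Submodule ℝ H := LinearMap.range (L : H →ₗ[ℝ] H) with hK
  have hbnd : ∀ x : H, ‖x‖ ≤ ((⟨(η*c)⁻¹, by positivity⟩ : NNReal) : ℝ) * ‖L x‖ := by
    intro x
    show ‖x‖ ≤ (η*c)⁻¹ * ‖L x‖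
    have h := hLlow x
    calc ‖x‖ = (η*c)⁻¹ * (η*c*‖x‖) := by field_simp
      _ ≤ (η*c)⁻¹ * ‖L x‖ := mul_le_mul_of_nonneg_left h (by positivity)
  have hKclosed : IsClosed (K : Set H) := by
    have h1 := (L.antilipschitz_of_bound hbnd).isClosed_range L.uniformContinuous
    have h2 : (K : Set H) = Set.range ⇑L := by
      ext z; simp [hK, LinearMap.mem_range]
    rwa [h2]
  haveI : CompleteSpace K := hKclosed.completeSpace_coe
  set Lcod : H →L[ℝ] K := L.codRestrict K (fun x => LinearMap.mem_range_self _ x) with hLcod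
  have hLcodapp : ∀ h : H, (Lcod h : H) = L h := fun h => rfl
  have hkerL : Lcod.ker = ⊥ := by
    rw [Submodule.eq_bot_iff]
    intro z hz
    have h0 : Lcod z = 0 := hz
    apply hLinj
    have h1 : (Lcod z : H) = L z := hLcodapp z
    rw [h0] at h1
    rw [map_zero]
    exact h1.symm ▸ rfl
  have hrangeL : Lcod.range = ⊤ := by
    rw [Submodule.eq_top_iff']
    rintro ⟨x, hx⟩
    obtain ⟨h, hh⟩ := hx
    exact ⟨h, Subtype.ext ((hLcodapp h).trans hh)⟩
  set Lr : H ≃L[ℝ] K := ContinuousLinearEquiv.ofBijective Lcod hkerL hrangeL with hLr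
  have hLrapp : ∀ h : H, (Lr h : H) = L h := by
    intro h
    rw [hLr, ContinuousLinearEquiv.coeFn_ofBijective]
    exact hLcodapp h
  set PKv : H →L[ℝ] K := orthogonalProjection K with hPKv
  set Φc : H →L[ℝ] H := B.comp ((Lr.symm : K →L[ℝ] H).comp PKv) with hΦc
  set Qc : H →L[ℝ] H := ContinuousLinearMap.id ℝ H - K.subtypeL.comp PKv with hQc
  have hQcapp : ∀ z : H, Qc z = z - (PKv z : H) := fun z => rfl
  have hPKL : ∀ h : H, PKv (L h) = Lr h := by
    intro h
    apply Subtype.ext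
    rw [hLrapp]
    exact Submodule.starProjection_eq_self_iff.2 (LinearMap.mem_range_self _ h)
  have hΦL : ∀ h : H, Φc (L h) = B h := by
    intro h
    have : Φc (L h) = B ((Lr.symm) (PKv (L h))) := rfl
    rw [this, hPKL, ContinuousLinearEquiv.symm_apply_apply]
  have hQL : ∀ h : H, Qc (L h) = 0 := by
    intro h
    rw [hQcapp, hPKL, hLrapp, sub_self]
  set N : Submodule ℝ H := span ℝ (I : Set H) with hN
  haveI : FiniteDimensional ℝ N := FiniteDimensional.span_of_finite ℝ I.finite_toSet
  have hNF : N ≤ F := span_le.2 (fun x hx => subset_span (Or.inr hx))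
  have hQinjN : ∀ x ∈ N, Qc x = 0 → x = 0 := by
    intro x hxN hQx
    have hxK : x ∈ K := by
      rw [hQcapp, sub_eq_zero] at hQx
      rw [hQx]
      exact (PKv x).2
    obtain ⟨h, hh⟩ := hxK
    have hxF : x ∈ F := hNF hxN
    have h1 : ⟪A (V h), x⟫ = 0 := hVorth h x hxF
    have h2 : ⟪A (V h), A (Y (Pm h))⟫ = 0 := hVorth h _ (hmapF _ (hPmMem h))
    have h3 : x = A (Y (Pm h)) + η • A (V h) := by rw [← hLapp h]; exact hh.symm
    have h4 : (0:ℝ) = η * ⟪A (V h), A (V h)⟫ := by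
      have := h1
      rw [h3, inner_add_right, h2, real_inner_smul_right] at this
      linarith
    have h5 : A (V h) = 0 := by
      have h6 : ⟪A (V h), A (V h)⟫ = 0 := by
        rcases mul_eq_zero.1 h4.symm with h | h
        · exact absurd h (ne_of_gt hη)
        · exact h
      exact inner_self_eq_zero.1 h6
    have h7 : h = 0 := by
      have := hVlow h
      rw [h5, norm_zero] at this
      have : ‖h‖ ≤ 0 := by nlinarith
      exact norm_le_zero_iff.1 this
    rw [h3, h7]
    simp
  set TN : N →ₗ[ℝ] H := (Qc : H →ₗ[ℝ] H).comp N.subtype with hTN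
  have hTNapp : ∀ z : N, TN z = Qc (z : H) := fun z => rfl
  have hTNinj : Function.Injective ⇑TN := by
    rw [← LinearMap.ker_eq_bot, LinearMap.ker_eq_bot']
    intro z hz
    apply Subtype.ext
    have : Qc (z : H) = 0 := by rw [← hTNapp]; exact hz
    exact hQinjN _ z.2 this
  set N' : Submodule ℝ H := LinearMap.range TN with hN'
  set eN : N ≃ₗ[ℝ] LinearMap.range TN := LinearEquiv.ofInjective TN hTNinj with heN
  haveI : FiniteDimensional ℝ N' := eN.finiteDimensional
  set g : N →ₗ[ℝ] H := ((X - Φc : H →L[ℝ] H) : H →ₗ[ℝ] H).comp N.subtype with hg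
  set φ : N' →ₗ[ℝ] H := g.comp (eN.symm : N' →ₗ[ℝ] N) with hφ
  set φc : N' →L[ℝ] H := LinearMap.toContinuousLinearMap φ with hφc
  haveI : CompleteSpace N' := FiniteDimensional.complete ℝ N'
  set Ψ : H →L[ℝ] H := φc.comp (orthogonalProjection N') with hΨ
  set X' : H →L[ℝ] H := Φc + Ψ.comp Qc with hX'
  have hX'L : ∀ h : H, X' (L h) = B h := by
    intro h
    have : X' (L h) = Φc (L h) + Ψ (Qc (L h)) := rfl
    rw [this, hΦL, hQL]
    simp
  have hX'I : ∀ x ∈ (I : Set H), X' x = X x := by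
    intro x hx
    have hxN : x ∈ N := subset_span hx
    have hQx : Qc x ∈ N' := ⟨⟨x, hxN⟩, rfl⟩
    have hproj : orthogonalProjection N' (Qc x) = ⟨Qc x, hQx⟩ := by
      apply Subtype.ext
      exact Submodule.starProjection_eq_self_iff.2 hQx
    have heNx : eN ⟨x, hxN⟩ = ⟨Qc x, hQx⟩ := by
      apply Subtype.ext
      rfl
    have hsymm : eN.symm ⟨Qc x, hQx⟩ = ⟨x, hxN⟩ := by
      rw [← heNx, LinearEquiv.symm_apply_apply]
    have hΨx : Ψ (Qc x) = X x - Φc x := by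
      have h1 : Ψ (Qc x) = φc (orthogonalProjection N' (Qc x)) := rfl
      rw [h1, hproj]
      have h2 : φc ⟨Qc x, hQx⟩ = g (eN.symm ⟨Qc x, hQx⟩) := rfl
      rw [h2, hsymm]
      rfl
    have : X' x = Φc x + Ψ (Qc x) := rfl
    rw [this, hΨx]
    abel
  have hY'J : ∀ y ∈ (J : Set H), Y' y = Y y + η • V y := by
    intro y hy
    have hyM : y ∈ M := subset_span hy
    have hPmy : Pm y = y := by
      have : (orthogonalProjection M y : H) = y := Submodule.starProjection_eq_self_iff.2 hyM
      simpa [hPm] using this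
    simp [hY', hPmy]
  refine ⟨(⇑X', ⇑Y'), hsub ⟨?_, ?_⟩, ⟨X', Y', ?_, rfl⟩⟩
  · apply hIsub
    rw [Set.mem_pi]
    intro x hxI
    show X' x ∈ uI x
    rw [hX'I x hxI]
    exact (hI x hxI).2
  · apply hJsub
    rw [Set.mem_pi]
    intro y hyJ
    apply hradsub y hyJ
    show Y' y ∈ ball (Y y) (rad y)
    rw [mem_ball, hY'J y hyJ]
    have : dist (Y y + η • V y) (Y y) = η * ‖y‖ := by
      rw [dist_eq_norm]
      simp only [add_sub_cancel_left]
      rw [norm_smul, Real.norm_eq_abs, abs_of_pos hη, hVnorm]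
    rw [this]
    exact hηlt y hyJ
  · exact ContinuousLinearMap.ext hX'L
end

section
/- Let X be a reflexive Banach space and let A be a compact bounded linear operator on X with infinite-dimensional range. Set K = A*(B_{X*}) ⊆ X*, the image of the closed unit ball of the dual space under the adjoint of A. Then a bounded linear operator R on X satisfies ‖ARx‖ ≥ ‖Ax‖ for all x ∈ X if and only if R*K ⊇ K, where R* denotes the adjoint of R. -/
open Filter Topology Metric

/-- Let `X` be a reflexive Banach space, `A` a compact operator on `X` with
infinite-dimensional range, and `K = A*(B_{X*})`. Then `‖ARx‖ ≥ ‖Ax‖` for all `x`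
if and only if `R* K ⊇ K`. -/
theorem expanding_iff_adjoint_covers
    {X : Type*} [NormedAddCommGroup X] [NormedSpace ℝ X] [CompleteSpace X]
    (hrefl : Function.Surjective (NormedSpace.inclusionInDoubleDual ℝ X))
    (A : X →L[ℝ] X) (hA : IsCompactOperator A)
    (hrange : ¬ FiniteDimensional ℝ (LinearMap.range (A : X →ₗ[ℝ] X)))
    (R : X →L[ℝ] X) :
    (∀ x : X, ‖A x‖ ≤ ‖A (R x)‖) ↔
      (fun f : X →L[ℝ] ℝ => f.comp A) '' Metric.closedBall 0 1 ⊆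
        (fun f : X →L[ℝ] ℝ => f.comp R) ''
          ((fun f : X →L[ℝ] ℝ => f.comp A) '' Metric.closedBall 0 1) := by
  constructor
  · intro h
    rintro _ ⟨f, hf, rfl⟩
    rw [Metric.mem_closedBall, dist_zero_right] at hf
    set T : X →L[ℝ] X := A.comp R with hTdef
    have hker : LinearMap.ker (T : X →ₗ[ℝ] X) ≤
        LinearMap.ker ((f.comp A : X →L[ℝ] ℝ) : X →ₗ[ℝ] ℝ) := by
      intro x hx
      simp only [LinearMap.mem_ker, ContinuousLinearMap.coe_coe] at hx ⊢
      have hx' : A (R x) = 0 := hx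
      have h1 : ‖A x‖ ≤ 0 := by simpa [hx'] using h x
      have hAx : A x = 0 := by
        simpa using le_antisymm h1 (norm_nonneg _)
      simp [ContinuousLinearMap.comp_apply, hAx]
    let ψ : (X ⧸ LinearMap.ker (T : X →ₗ[ℝ] X)) →ₗ[ℝ] ℝ :=
      Submodule.liftQ _ _ hker
    let e := LinearMap.quotKerEquivRange (T : X →ₗ[ℝ] X)
    let φ : LinearMap.range (T : X →ₗ[ℝ] X) →ₗ[ℝ] ℝ :=
      ψ ∘ₗ (e.symm : LinearMap.range (T : X →ₗ[ℝ] X) →ₗ[ℝ] _)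
    have hφ : ∀ x : X, φ ⟨T x, LinearMap.mem_range_self _ x⟩ = f (A x) := by
      intro x
      have he : e (Submodule.Quotient.mk x) = ⟨T x, LinearMap.mem_range_self _ x⟩ := by
        apply Subtype.ext
        simp [e, LinearMap.quotKerEquivRange]
      have hsymm : e.symm ⟨T x, LinearMap.mem_range_self _ x⟩ = Submodule.Quotient.mk x := by
        rw [← he, LinearEquiv.symm_apply_apply]
      simp [φ, ψ, hsymm, Submodule.liftQ_apply]
    have hb : ∀ y : LinearMap.range (T : X →ₗ[ℝ] X), ‖φ y‖ ≤ 1 * ‖y‖ := by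
      rintro ⟨y, hy⟩
      obtain ⟨x, rfl⟩ := hy
      have : (⟨(T : X →ₗ[ℝ] X) x, _⟩ : LinearMap.range (T : X →ₗ[ℝ] X)) =
          ⟨T x, LinearMap.mem_range_self _ x⟩ := rfl
      rw [this, hφ x]
      calc ‖f (A x)‖ ≤ ‖f‖ * ‖A x‖ := f.le_opNorm _
        _ ≤ 1 * ‖A x‖ := by
            exact mul_le_mul_of_nonneg_right hf (norm_nonneg _)
        _ ≤ 1 * ‖A (R x)‖ := by
            rw [one_mul, one_mul]; exact h x
        _ = 1 * ‖(⟨T x, LinearMap.mem_range_self _ x⟩ :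
              LinearMap.range (T : X →ₗ[ℝ] X))‖ := rfl
    let φc : LinearMap.range (T : X →ₗ[ℝ] X) →L[ℝ] ℝ := φ.mkContinuous 1 hb
    obtain ⟨g, hg, hgnorm⟩ := exists_extension_norm_eq _ φc
    refine ⟨g.comp A, ⟨g, ?_, rfl⟩, ?_⟩
    · rw [Metric.mem_closedBall, dist_zero_right, hgnorm]
      exact LinearMap.mkContinuous_norm_le _ zero_le_one hb
    · ext x
      have hgx := hg ⟨T x, LinearMap.mem_range_self _ x⟩
      have : g (A (R x)) = f (A x) := by
        rw [← hφ x]; exact hgx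
      simpa using this
  · intro h x
    by_cases hx : A x = 0
    · simp [hx]
    obtain ⟨f, hf1, hfx⟩ := exists_dual_vector ℝ (A x) (norm_ne_zero_iff.mpr hx)
    have hfmem : f.comp A ∈ (fun f : X →L[ℝ] ℝ => f.comp A) '' Metric.closedBall 0 1 :=
      ⟨f, by simp [Metric.mem_closedBall, hf1], rfl⟩
    obtain ⟨_, ⟨g, hg, rfl⟩, heq⟩ := h hfmem
    rw [Metric.mem_closedBall, dist_zero_right] at hg
    have hpt : g (A (R x)) = f (A x) := by
      have := congrArg (fun (φ : X →L[ℝ] ℝ) => φ x) heq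
      simpa using this
    calc ‖A x‖ = f (A x) := by exact_mod_cast hfx.symm
      _ = g (A (R x)) := hpt.symm
      _ ≤ ‖g (A (R x))‖ := le_abs_self _
      _ ≤ ‖g‖ * ‖A (R x)‖ := g.le_opNorm _
      _ ≤ 1 * ‖A (R x)‖ := mul_le_mul_of_nonneg_right hg (norm_nonneg _)
      _ = ‖A (R x)‖ := one_mul _
end
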